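/- arXiv:2605.27175 — 5 statements merged into one kernel-verified Lean document; each statement's English description precedes it below -/
import Mathlib

section
/- Strong duality holds for quadratically regularized optimal transport: QOT_ε(P,Q) = sup over (f,g) ∈ L²(P) × L²(Q) of Γ(f,g). -/
open MeasureTheory Metric
open scoped ENNReal
open scoped RealInnerProductSpace

/-- The dual QOT objective `Γ(f,g)`. -/
noncomputable def Gamma {d : ℕ} (ε : ℝ) (P Q : Measure (EuclideanSpace ℝ (Fin d)))
    (c : EuclideanSpace ℝ (Fin d) → EuclideanSpace ℝ (Fin d) → ℝ)
    (f g : EuclideanSpace ℝ (Fin d) → ℝ) : ℝ :=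
  ∫ p, (f p.1 + g p.2 - (1 / (2 * ε)) * (max (f p.1 + g p.2 - c p.1 p.2) 0) ^ 2) ∂(P.prod Q)

/-- The primal QOT cost of a coupling `π` (for `π ≪ P ⊗ Q`). -/
noncomputable def primalCost {d : ℕ} (ε : ℝ) (P Q : Measure (EuclideanSpace ℝ (Fin d)))
    (c : EuclideanSpace ℝ (Fin d) → EuclideanSpace ℝ (Fin d) → ℝ)
    (π : Measure (EuclideanSpace ℝ (Fin d) × EuclideanSpace ℝ (Fin d))) : ℝ :=
  (∫ p, c p.1 p.2 ∂π) + (ε / 2) * ∫ p, ((π.rnDeriv (P.prod Q) p).toReal) ^ 2 ∂(P.prod Q)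

/-- Feasible couplings: elements of `Π(P,Q)` that are absolutely continuous w.r.t. `P ⊗ Q`
with square-integrable density (all other couplings have primal cost `+∞` by convention). -/
def IsFeasible {d : ℕ} (P Q : Measure (EuclideanSpace ℝ (Fin d)))
    (π : Measure (EuclideanSpace ℝ (Fin d) × EuclideanSpace ℝ (Fin d))) : Prop :=
  IsProbabilityMeasure π ∧ π.fst = P ∧ π.snd = Q ∧ π ≪ P.prod Q ∧
    MemLp (fun p => (π.rnDeriv (P.prod Q) p).toReal) 2 (P.prod Q)


set_option maxHeartbeats 1000000


/-- Abstract Hahn–Banach subgradient lemma for a convex "epigraph-like" set in `H × ℝ`. -/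
lemma qot_exists_subgradient {H : Type*} [NormedAddCommGroup H] [InnerProductSpace ℝ H]
    [CompleteSpace H] (S : Set (H × ℝ)) (hconv : Convex ℝ S) (r M m : ℝ) (hr : 0 < r)
    (hball : ∀ u t, ‖u‖ < r → M < t → (u, t) ∈ S) (hm : (0, m) ∉ S) :
    ∃ h : H, ∀ u t, (u, t) ∈ S → m + ⟪h, u⟫ ≤ t := by
  have hBsub : (ball (0 : H) r) ×ˢ (Set.Ioi M) ⊆ S := by
    rintro ⟨u, t⟩ ⟨hu, ht⟩
    exact hball u t (by simpa using hu) ht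
  have hBopen : IsOpen ((ball (0 : H) r) ×ˢ (Set.Ioi M)) := isOpen_ball.prod isOpen_Ioi
  have hBint : (ball (0 : H) r) ×ˢ (Set.Ioi M) ⊆ interior S := hBopen.subset_interior_iff.2 hBsub
  have hp0 : ((0 : H), M + 1) ∈ interior S :=
    hBint ⟨mem_ball_self hr, by simp⟩
  have hmint : ((0 : H), m) ∉ interior S := fun h => hm (interior_subset h)
  obtain ⟨ℓ, hℓ⟩ := geometric_hahn_banach_open_point (hconv.interior) isOpen_interior hmint
  -- ℓ a < ℓ (0, m) for all a in interior S; extend to ≤ on S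
  have hS : ∀ a ∈ S, ℓ a ≤ ℓ ((0 : H), m) := by
    intro a ha
    have seg : ∀ θ : ℝ, 0 < θ → θ ≤ 1 →
        θ • (((0 : H), M + 1)) + (1 - θ) • a ∈ interior S := by
      intro θ hθ hθ1
      exact hconv.combo_interior_self_mem_interior hp0 ha hθ (by linarith) (by ring)
    have cont : Continuous (fun θ : ℝ => ℓ (θ • (((0 : H), M + 1)) + (1 - θ) • a)) := by
      fun_prop
    have tend : Filter.Tendsto (fun θ : ℝ => ℓ (θ • (((0 : H), M + 1)) + (1 - θ) • a))
        (nhdsWithin 0 (Set.Ioi 0)) (nhds (ℓ a)) := by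
      have h0 : ℓ ((0:ℝ) • (((0 : H), M + 1)) + (1 - (0:ℝ)) • a) = ℓ a := by simp
      have := cont.tendsto 0
      rw [h0] at this
      exact this.mono_left nhdsWithin_le_nhds
    refine le_of_tendsto tend ?_
    filter_upwards [Ioo_mem_nhdsGT_of_mem (by norm_num : (0:ℝ) ∈ Set.Ico 0 1)] with θ hθ
    exact le_of_lt (hℓ _ (seg θ hθ.1 (le_of_lt hθ.2)))
  -- decompose ℓ
  have hdecomp : ∀ u : H, ∀ t : ℝ, ℓ (u, t) = ℓ (u, 0) + ℓ ((0 : H), 1) * t := by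
    intro u t
    have h1 : (u, t) = (u, (0:ℝ)) + t • (((0 : H), (1:ℝ))) := by
      simp [Prod.ext_iff]
    rw [h1, map_add ℓ, ContinuousLinearMap.map_smul]
    simp [smul_eq_mul, mul_comm]
  set α : ℝ := ℓ ((0 : H), 1) with hα
  have hm0 : ℓ ((0 : H), m) = α * m := by
    have := hdecomp 0 m
    have h00 : ℓ ((0 : H), (0:ℝ)) = 0 := by
      rw [show (((0:H), (0:ℝ))) = (0 : H × ℝ) from rfl, map_zero]
    simpa [h00] using this
  have hℓ00 : ℓ ((0 : H), (0:ℝ)) = 0 := by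
    have : (((0:H), (0:ℝ))) = (0 : H × ℝ) := rfl
    rw [this, map_zero]
  -- α < 0
  have hαneg : α < 0 := by
    rcases lt_trichotomy α 0 with h | h | h
    · exact h
    · exfalso
      have h2 := hℓ _ hp0
      rw [hm0, hdecomp, hℓ00, h] at h2
      simp at h2
    · exfalso
      have key : ∀ t : ℝ, M < t → α * t ≤ α * m := by
        intro t ht
        have h2 := hS _ (hball 0 t (by simpa using hr) ht)
        rw [hdecomp, hm0, hℓ00] at h2
        linarith
      have h1 := key (max M m + 1) (by nlinarith [le_max_left M m])
      nlinarith [le_max_right M m]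
  -- the subgradient
  set ψ : H →L[ℝ] ℝ := (-α⁻¹) • (ℓ.comp (ContinuousLinearMap.inl ℝ H ℝ)) with hψ
  refine ⟨(InnerProductSpace.toDual ℝ H).symm ψ, ?_⟩
  intro u t hut
  have hinner : ⟪(InnerProductSpace.toDual ℝ H).symm ψ, u⟫ = -(ℓ (u, 0)) / α := by
    have h3 := InnerProductSpace.toDual_symm_apply (𝕜 := ℝ) (E := H) (x := u) (y := ψ)
    rw [h3]
    simp only [hψ, ContinuousLinearMap.smul_apply, ContinuousLinearMap.comp_apply,
      ContinuousLinearMap.inl_apply, smul_eq_mul]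
    ring
  rw [hinner]
  have h4 := hS _ hut
  rw [hdecomp, hm0] at h4
  have h5 : α * t ≤ α * m - ℓ (u, 0) := by linarith
  have h6 : t ≥ (α * m - ℓ (u, 0)) / α := by
    rw [ge_iff_le, div_le_iff_of_neg hαneg]
    linarith
  have h7 : (α * m - ℓ (u, 0)) / α = m - ℓ (u, 0) / α := by
    rw [sub_div]
    congr 1
    exact mul_div_cancel_left₀ m hαneg.ne
  have h8 : -(ℓ (u, 0)) / α = - (ℓ (u, 0) / α) := by ring
  linarith [h6, h7.symm ▸ h6]


section AuxGeneral
variable {α : Type*} [MeasurableSpace α] {μ : Measure α}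

lemma qot_integrable_mul_L2 {f g : α → ℝ} (hf : MemLp f 2 μ) (hg : MemLp g 2 μ) :
    Integrable (fun x => f x * g x) μ := by
  have hpqr : (1 : ℝ≥0∞)/1 = 1/2 + 1/2 := by
    rw [ENNReal.div_add_div_same]
    rw [show (1:ℝ≥0∞) + 1 = 2 from one_add_one_eq_two]
    rw [one_div, inv_one]
    exact (ENNReal.div_self two_ne_zero ENNReal.ofNat_ne_top).symm
  have h := hf.smul (r := 1) hg
  rw [memLp_one_iff_integrable] at h
  exact (by simpa [smul_eq_mul, mul_comm] using h : Integrable (f * g) μ)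

lemma qot_young (ε : ℝ) (hε : 0 < ε) (s h : ℝ) (hh : 0 ≤ h) :
    s * h ≤ (1/(2*ε)) * (max s 0)^2 + (ε/2) * h^2 := by
  have hm : s ≤ max s 0 := le_max_left _ _
  have h1 : s * h ≤ max s 0 * h := mul_le_mul_of_nonneg_right hm hh
  have h2 : 2*ε*(max s 0 * h) ≤ (max s 0)^2 + ε^2 * h^2 := by nlinarith [sq_nonneg (max s 0 - ε*h)]
  have h3 : max s 0 * h ≤ ((max s 0)^2 + ε^2*h^2) / (2*ε) := by
    rw [le_div_iff₀ (by positivity)]; linarith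
  have h4 : ((max s 0)^2 + ε^2*h^2)/(2*ε) = (1/(2*ε)) * (max s 0)^2 + (ε/2)*h^2 := by
    field_simp
  linarith

lemma qot_maxsq_combo (cv x y a b : ℝ) (ha : 0 ≤ a) (hb : 0 ≤ b) (hab : a + b = 1) :
    (max (a*x + b*y - cv) 0)^2 ≤ a * (max (x-cv) 0)^2 + b * (max (y-cv) 0)^2 := by
  set A := max (x - cv) 0 with hA
  set B := max (y - cv) 0 with hB
  have hA1 : x - cv ≤ A := le_max_left _ _
  have hA0 : 0 ≤ A := le_max_right _ _
  have hB1 : y - cv ≤ B := le_max_left _ _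
  have hB0 : 0 ≤ B := le_max_right _ _
  have hT0 : 0 ≤ a*A + b*B := by positivity
  have hle : max (a*x + b*y - cv) 0 ≤ a*A + b*B := by
    apply max_le _ hT0
    have hb' : b = 1 - a := by linarith
    have : a*x + b*y - cv = a*(x - cv) + b*(y - cv) := by rw [hb']; ring
    rw [this]
    exact add_le_add (mul_le_mul_of_nonneg_left hA1 ha) (mul_le_mul_of_nonneg_left hB1 hb)
  have hsq : (max (a*x + b*y - cv) 0)^2 ≤ (a*A + b*B)^2 := by
    apply pow_le_pow_left₀ (le_max_right _ _) hle
  have hconv : (a*A + b*B)^2 ≤ a * A^2 + b * B^2 := by nlinarith [sq_nonneg (A - B), mul_nonneg ha hb]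
  linarith

lemma qot_integrable_maxsq {v w : α → ℝ} (hv : MemLp v 2 μ) (hw : MemLp w 2 μ) :
    Integrable (fun a => (max (v a - w a) 0)^2) μ := by
  have hsub : MemLp (v - w) 2 μ := hv.sub hw
  have hsq : Integrable (fun a => (v a - w a)^2) μ := by
    simpa [Pi.sub_apply] using hsub.integrable_sq
  refine hsq.mono' ?_ ?_
  · exact ((hsub.aestronglyMeasurable.aemeasurable.max aemeasurable_const).pow_const 2
      ).aestronglyMeasurable
  · filter_upwards with a
    have h0 : (0:ℝ) ≤ (max (v a - w a) 0)^2 := sq_nonneg _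
    have hle : (max (v a - w a) 0)^2 ≤ (v a - w a)^2 := by
      rcases le_or_gt (v a - w a) 0 with h | h
      · simp [max_eq_right h, sq_nonneg]
      · rw [max_eq_left h.le]
    rw [Real.norm_eq_abs, abs_of_nonneg h0]
    exact hle

/-- The functional `K` at the level of functions. -/
noncomputable def Kfun (ε : ℝ) (μ : Measure α) (c' v : α → ℝ) : ℝ :=
  (1/(2*ε)) * ∫ a, (max (v a - c' a) 0)^2 ∂μ

lemma Kfun_congr {c' v w : α → ℝ} (hvw : v =ᵐ[μ] w) (ε : ℝ) :
    Kfun ε μ c' v = Kfun ε μ c' w := by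
  unfold Kfun
  congr 1
  apply integral_congr_ae
  filter_upwards [hvw] with a ha
  rw [ha]

lemma Kfun_nonneg {c' v : α → ℝ} (ε : ℝ) (hε : 0 < ε) : 0 ≤ Kfun ε μ c' v := by
  unfold Kfun
  apply mul_nonneg (by positivity)
  exact integral_nonneg (fun a => sq_nonneg _)

lemma Kfun_combo {c' v w : α → ℝ} (ε : ℝ) (hε : 0 < ε) (hc' : MemLp c' 2 μ)
    (hv : MemLp v 2 μ) (hw : MemLp w 2 μ) {a b : ℝ} (ha : 0 ≤ a) (hb : 0 ≤ b) (hab : a + b = 1) :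
    Kfun ε μ c' (fun x => a * v x + b * w x) ≤ a * Kfun ε μ c' v + b * Kfun ε μ c' w := by
  have hcombo : MemLp (fun x => a * v x + b * w x) 2 μ := by
    exact (hv.const_mul a).add (hw.const_mul b)
  have h1 : ∫ x, (max ((a * v x + b * w x) - c' x) 0)^2 ∂μ ≤
      ∫ x, (a * (max (v x - c' x) 0)^2 + b * (max (w x - c' x) 0)^2) ∂μ := by
    apply integral_mono (qot_integrable_maxsq hcombo hc')
    · exact ((qot_integrable_maxsq hv hc').const_mul a).add
        ((qot_integrable_maxsq hw hc').const_mul b)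
    · intro x
      exact qot_maxsq_combo (c' x) (v x) (w x) a b ha hb hab
  have h2 : ∫ x, (a * (max (v x - c' x) 0)^2 + b * (max (w x - c' x) 0)^2) ∂μ
      = a * ∫ x, (max (v x - c' x) 0)^2 ∂μ + b * ∫ x, (max (w x - c' x) 0)^2 ∂μ := by
    rw [integral_add ((qot_integrable_maxsq hv hc').const_mul a)
      ((qot_integrable_maxsq hw hc').const_mul b), integral_const_mul, integral_const_mul]
  unfold Kfun
  calc (1/(2*ε)) * ∫ x, (max ((fun x => a * v x + b * w x) x - c' x) 0)^2 ∂μ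
      ≤ (1/(2*ε)) * (a * ∫ x, (max (v x - c' x) 0)^2 ∂μ + b * ∫ x, (max (w x - c' x) 0)^2 ∂μ) := by
        apply mul_le_mul_of_nonneg_left _ (by positivity)
        rw [← h2]; exact h1
    _ = a * ((1/(2*ε)) * ∫ x, (max (v x - c' x) 0)^2 ∂μ)
        + b * ((1/(2*ε)) * ∫ x, (max (w x - c' x) 0)^2 ∂μ) := by ring

end AuxGeneral

set_option linter.unusedSectionVars false
section AuxProd
variable {β γ : Type*} [MeasurableSpace β] [MeasurableSpace γ]
variable (P : Measure β) (Q : Measure γ) [IsProbabilityMeasure P] [IsProbabilityMeasure Q]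

lemma qot_mp_fst : MeasurePreserving Prod.fst (P.prod Q) P :=
  ⟨measurable_fst, by simp⟩

lemma qot_mp_snd : MeasurePreserving Prod.snd (P.prod Q) Q :=
  ⟨measurable_snd, by simp⟩

lemma qot_memℒp_fst {f : β → ℝ} (hf : MemLp f 2 P) :
    MemLp (fun p : β × γ => f p.1) 2 (P.prod Q) :=
  hf.comp_measurePreserving (qot_mp_fst P Q)

lemma qot_memℒp_snd {g : γ → ℝ} (hg : MemLp g 2 Q) :
    MemLp (fun p : β × γ => g p.2) 2 (P.prod Q) :=
  hg.comp_measurePreserving (qot_mp_snd P Q)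

lemma qot_integral_fst {f : β → ℝ} (hf : AEStronglyMeasurable f P) :
    ∫ p, f p.1 ∂(P.prod Q) = ∫ x, f x ∂P := by
  have h1 : Measure.map Prod.fst (P.prod Q) = P := (qot_mp_fst P Q).map_eq
  calc ∫ p, f p.1 ∂(P.prod Q) = ∫ x, f x ∂(Measure.map Prod.fst (P.prod Q)) :=
        (integral_map measurable_fst.aemeasurable (by rwa [h1])).symm
    _ = ∫ x, f x ∂P := by rw [h1]

lemma qot_integral_snd {g : γ → ℝ} (hg : AEStronglyMeasurable g Q) :
    ∫ p, g p.2 ∂(P.prod Q) = ∫ y, g y ∂Q := by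
  have h1 : Measure.map Prod.snd (P.prod Q) = Q := (qot_mp_snd P Q).map_eq
  calc ∫ p, g p.2 ∂(P.prod Q) = ∫ y, g y ∂(Measure.map Prod.snd (P.prod Q)) :=
        (integral_map measurable_snd.aemeasurable (by rwa [h1])).symm
    _ = ∫ y, g y ∂Q := by rw [h1]

end AuxProd



section AuxQOT
variable {d : ℕ} (ε : ℝ) (P Q : Measure (EuclideanSpace ℝ (Fin d)))
  [IsProbabilityMeasure P] [IsProbabilityMeasure Q]
  (c : EuclideanSpace ℝ (Fin d) → EuclideanSpace ℝ (Fin d) → ℝ)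

lemma qot_gamma_split (hε : 0 < ε) (hcL2 : MemLp (Function.uncurry c) 2 (P.prod Q))
    {f g : EuclideanSpace ℝ (Fin d) → ℝ} (hf : MemLp f 2 P) (hg : MemLp g 2 Q) :
    Gamma ε P Q c f g = ((∫ x, f x ∂P) + (∫ y, g y ∂Q)) -
      Kfun ε (P.prod Q) (Function.uncurry c) (fun p => f p.1 + g p.2) := by
  have hfg : MemLp (fun p : _ × _ => f p.1 + g p.2) 2 (P.prod Q) :=
    (qot_memℒp_fst P Q hf).add (qot_memℒp_snd P Q hg)
  have hint1 : Integrable (fun p : _ × _ => f p.1 + g p.2) (P.prod Q) :=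
    hfg.integrable one_le_two
  have hint2 : Integrable
      (fun p : _ × _ => (max (f p.1 + g p.2 - Function.uncurry c p) 0)^2) (P.prod Q) :=
    qot_integrable_maxsq hfg hcL2
  have hsplit := integral_sub hint1 (hint2.const_mul (1/(2*ε)))
  unfold Gamma Kfun
  rw [show (fun p : _ × _ => f p.1 + g p.2 - 1 / (2 * ε) * (max (f p.1 + g p.2 - c p.1 p.2) 0) ^ 2)
      = (fun p : _ × _ => (f p.1 + g p.2) -
        (1/(2*ε)) * (max (f p.1 + g p.2 - Function.uncurry c p) 0)^2) from rfl]
  rw [hsplit, integral_const_mul]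
  congr 1
  rw [integral_add ((qot_memℒp_fst P Q hf).integrable one_le_two)
    ((qot_memℒp_snd P Q hg).integrable one_le_two),
    qot_integral_fst P Q hf.aestronglyMeasurable, qot_integral_snd P Q hg.aestronglyMeasurable]

lemma qot_weak_duality (hε : 0 < ε) (hcL2 : MemLp (Function.uncurry c) 2 (P.prod Q))
    {π : Measure (EuclideanSpace ℝ (Fin d) × EuclideanSpace ℝ (Fin d))}
    (hfeas : IsFeasible P Q π)
    {f g : EuclideanSpace ℝ (Fin d) → ℝ} (hf : MemLp f 2 P) (hg : MemLp g 2 Q) :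
    Gamma ε P Q c f g ≤ primalCost ε P Q c π := by
  obtain ⟨hπp, hπ1, hπ2, hπac, hπL2⟩ := hfeas
  haveI := hπp
  set μ := P.prod Q with hμ
  set h : EuclideanSpace ℝ (Fin d) × EuclideanSpace ℝ (Fin d) → ℝ :=
    fun p => (π.rnDeriv μ p).toReal with hh
  have hh0 : ∀ p, 0 ≤ h p := fun p => ENNReal.toReal_nonneg
  have hfg : MemLp (fun p : _ × _ => f p.1 + g p.2) 2 μ :=
    (qot_memℒp_fst P Q hf).add (qot_memℒp_snd P Q hg)
  -- marginal identities
  have hmapfst : Measure.map Prod.fst π = P := hπ1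
  have hmapsnd : Measure.map Prod.snd π = Q := hπ2
  have hfπ : MemLp (fun p : _ × _ => f p.1) 2 π :=
    hf.comp_measurePreserving ⟨measurable_fst, hmapfst⟩
  have hgπ : MemLp (fun p : _ × _ => g p.2) 2 π :=
    hg.comp_measurePreserving ⟨measurable_snd, hmapsnd⟩
  have hfP : ∫ x, f x ∂P = ∫ p, f p.1 ∂π := by
    rw [← hmapfst]
    exact integral_map measurable_fst.aemeasurable (by rw [hmapfst]; exact hf.aestronglyMeasurable)
  have hgQ : ∫ y, g y ∂Q = ∫ p, g p.2 ∂π := by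
    rw [← hmapsnd]
    exact integral_map measurable_snd.aemeasurable (by rw [hmapsnd]; exact hg.aestronglyMeasurable)
  have hsum : (∫ x, f x ∂P) + (∫ y, g y ∂Q) = ∫ p, (f p.1 + g p.2) ∂π := by
    rw [hfP, hgQ, ← integral_add (hfπ.integrable one_le_two) (hgπ.integrable one_le_two)]
  -- transfer to density integrals
  have htrans : ∀ (F : EuclideanSpace ℝ (Fin d) × EuclideanSpace ℝ (Fin d) → ℝ),
      ∫ p, h p * F p ∂μ = ∫ p, F p ∂π := by
    intro F
    have := MeasureTheory.integral_rnDeriv_smul (μ := π) (ν := μ) hπac (f := F)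
    simpa [smul_eq_mul, hh] using this
  have hfgdens : ∫ p, (f p.1 + g p.2) ∂π = ∫ p, h p * (f p.1 + g p.2) ∂μ :=
    (htrans _).symm
  have hcdens : ∫ p, c p.1 p.2 ∂π = ∫ p, h p * c p.1 p.2 ∂μ :=
    (htrans _).symm
  -- rewrite Gamma
  rw [qot_gamma_split ε P Q c hε hcL2 hf hg, hsum, hfgdens]
  -- integrabilities
  have hint_mul : Integrable (fun p => h p * (f p.1 + g p.2)) μ :=
    qot_integrable_mul_L2 hπL2 hfg
  have hint_max : Integrable
      (fun p : _ × _ => (max (f p.1 + g p.2 - Function.uncurry c p) 0)^2) μ :=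
    qot_integrable_maxsq hfg hcL2
  have hint_hc : Integrable (fun p => h p * c p.1 p.2) μ := by
    have := qot_integrable_mul_L2 hπL2 hcL2
    simpa [Function.uncurry] using this
  have hint_h2 : Integrable (fun p => (h p)^2) μ := hπL2.integrable_sq
  -- key pointwise estimate and integral inequality
  have hkey : ∫ p, (h p * (f p.1 + g p.2) - (1/(2*ε)) *
        (max (f p.1 + g p.2 - Function.uncurry c p) 0)^2) ∂μ ≤
      ∫ p, (h p * c p.1 p.2 + (ε/2) * (h p)^2) ∂μ := by
    apply integral_mono (hint_mul.sub (hint_max.const_mul _)) (hint_hc.add (hint_h2.const_mul _))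
    intro p
    simp only [Pi.sub_apply, Pi.add_apply]
    have := qot_young ε hε (f p.1 + g p.2 - Function.uncurry c p) (h p) (hh0 p)
    have hexp : (f p.1 + g p.2 - Function.uncurry c p) * h p
        = h p * (f p.1 + g p.2) - h p * c p.1 p.2 := by
      simp [Function.uncurry]; ring
    rw [hexp] at this
    simp only [Function.uncurry] at this ⊢
    linarith
  have hsplit1 : ∫ p, (h p * (f p.1 + g p.2) - (1/(2*ε)) *
        (max (f p.1 + g p.2 - Function.uncurry c p) 0)^2) ∂μ
      = (∫ p, h p * (f p.1 + g p.2) ∂μ) - (1/(2*ε)) *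
        ∫ p, (max (f p.1 + g p.2 - Function.uncurry c p) 0)^2 ∂μ := by
    rw [integral_sub hint_mul (hint_max.const_mul _), integral_const_mul]
  have hsplit2 : ∫ p, (h p * c p.1 p.2 + (ε/2) * (h p)^2) ∂μ
      = (∫ p, h p * c p.1 p.2 ∂μ) + (ε/2) * ∫ p, (h p)^2 ∂μ := by
    rw [integral_add hint_hc (hint_h2.const_mul _), integral_const_mul]
  rw [hsplit1, hsplit2] at hkey
  unfold primalCost Kfun
  rw [hcdens]
  simp only [Function.uncurry] at hkey ⊢
  linarith
end AuxQOT


section AuxHelpers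
variable {α : Type*} [MeasurableSpace α] {μ : Measure α}

lemma qot_le_of_forall_pos_le_add {x y : ℝ} (h : ∀ δ : ℝ, 0 < δ → x ≤ y + δ) : x ≤ y := by
  by_contra hxy
  push_neg at hxy
  have := h ((x - y)/2) (by linarith)
  linarith

lemma qot_eq_zero_of_forall_mul_le {x C : ℝ} (h : ∀ t : ℝ, t * x ≤ C) : x = 0 := by
  by_contra hx
  have h1 := h ((C+1)/x)
  rw [div_mul_cancel₀ _ hx] at h1
  linarith

lemma qot_nonpos_of_forall_nonneg_mul_le {x C : ℝ} (h : ∀ t : ℝ, 0 ≤ t → t * x ≤ C) : x ≤ 0 := by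
  by_contra hx
  push_neg at hx
  have hC : 0 ≤ C := by simpa using h 0 le_rfl
  have h1 := h ((C+1)/x) (by positivity)
  rw [div_mul_cancel₀ _ (ne_of_gt hx)] at h1
  linarith

lemma qot_inner_eq (u v : Lp ℝ 2 μ) : ⟪u, v⟫ = ∫ a, u a * v a ∂μ := by
  rw [L2.inner_def]
  apply integral_congr_ae
  filter_upwards with a
  rw [RCLike.inner_apply]
  simp
  ring

lemma qot_integral_sq_eq_norm_sq (u : Lp ℝ 2 μ) : ∫ a, (u a)^2 ∂μ = ‖u‖^2 := by
  rw [← real_inner_self_eq_norm_sq, qot_inner_eq]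
  congr 1
  ext a
  ring

/-- bound for `Kfun` on the unit ball of L². -/
lemma qot_Kfun_ball_bound {c' : α → ℝ} (ε : ℝ) (hε : 0 < ε) (hc' : MemLp c' 2 μ)
    (u : Lp ℝ 2 μ) :
    Kfun ε μ c' ⇑u ≤ (1/ε) * (‖u‖^2 + ∫ a, (c' a)^2 ∂μ) := by
  have huL2 : MemLp (⇑u) 2 μ := Lp.memLp u
  have h1 : ∫ a, (max (u a - c' a) 0)^2 ∂μ ≤ ∫ a, (2*(u a)^2 + 2*(c' a)^2) ∂μ := by
    apply integral_mono (qot_integrable_maxsq huL2 hc')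
      ((huL2.integrable_sq.const_mul 2).add (hc'.integrable_sq.const_mul 2))
    intro a
    simp only [Pi.add_apply]
    have : (max (u a - c' a) 0)^2 ≤ (u a - c' a)^2 := by
      rcases le_or_gt (u a - c' a) 0 with h | h
      · simp [max_eq_right h, sq_nonneg]
      · rw [max_eq_left h.le]
    nlinarith [sq_nonneg (u a + c' a)]
  have h2 : ∫ a, (2*(u a)^2 + 2*(c' a)^2) ∂μ = 2 * ∫ a, (u a)^2 ∂μ + 2 * ∫ a, (c' a)^2 ∂μ := by
    rw [integral_add (huL2.integrable_sq.const_mul 2) (hc'.integrable_sq.const_mul 2),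
      integral_const_mul, integral_const_mul]
  unfold Kfun
  rw [qot_integral_sq_eq_norm_sq] at h2
  calc (1/(2*ε)) * ∫ a, (max (u a - c' a) 0)^2 ∂μ
      ≤ (1/(2*ε)) * (2 * ‖u‖^2 + 2 * ∫ a, (c' a)^2 ∂μ) := by
        apply mul_le_mul_of_nonneg_left _ (by positivity)
        rw [← h2]; exact h1
    _ = (1/ε) * (‖u‖^2 + ∫ a, (c' a)^2 ∂μ) := by field_simp

end AuxHelpers

lemma qot_prod_feasible {d : ℕ} (P Q : Measure (EuclideanSpace ℝ (Fin d)))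
    [IsProbabilityMeasure P] [IsProbabilityMeasure Q] : IsFeasible P Q (P.prod Q) := by
  refine ⟨inferInstance, Measure.fst_prod, Measure.snd_prod, Measure.AbsolutelyContinuous.rfl, ?_⟩
  have hr := Measure.rnDeriv_self (P.prod Q)
  have : (fun p => ((P.prod Q).rnDeriv (P.prod Q) p).toReal) =ᵐ[P.prod Q] fun _ => (1:ℝ) := by
    filter_upwards [hr] with p hp
    rw [hp]
    simp
  exact (memLp_const 1).ae_eq this.symm

/-- Strong duality for quadratically regularized optimal transport:
`QOT_ε(P,Q) = sup_{(f,g) ∈ L²(P) × L²(Q)} Γ(f,g)`. -/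
theorem strong_duality_QOT
    (d : ℕ) (hd : 1 ≤ d) (ε : ℝ) (hε : 0 < ε)
    (Ω Ω' : Set (EuclideanSpace ℝ (Fin d)))
    (hΩc : IsCompact Ω) (hΩconv : Convex ℝ Ω) (hΩne : Ω.Nonempty)
    (hΩ'c : IsCompact Ω') (hΩ'ne : Ω'.Nonempty)
    (P Q : Measure (EuclideanSpace ℝ (Fin d)))
    [IsProbabilityMeasure P] [IsProbabilityMeasure Q]
    (ρ : EuclideanSpace ℝ (Fin d) → ℝ) (hρm : Measurable ρ)
    (lamP LamP : ℝ) (hlam : 0 < lamP)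
    (hPdef : P = (volume.restrict Ω).withDensity fun x => ENNReal.ofReal (ρ x))
    (hρlb : ∀ x ∈ Ω, lamP ≤ ρ x) (hρub : ∀ x ∈ Ω, ρ x ≤ LamP)
    (hQsupp : Q Ω'ᶜ = 0)
    (c : EuclideanSpace ℝ (Fin d) → EuclideanSpace ℝ (Fin d) → ℝ)
    (L : ℝ) (hL : 0 < L)
    (hc : LipschitzWith (Real.toNNReal L) (Function.uncurry c)) :
    sInf {v : ℝ | ∃ π, IsFeasible P Q π ∧ v = primalCost ε P Q c π} =
      sSup {v : ℝ | ∃ f g : EuclideanSpace ℝ (Fin d) → ℝ,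
        MemLp f 2 P ∧ MemLp g 2 Q ∧ v = Gamma ε P Q c f g} := by
  classical
  -- support and boundedness of the cost
  have hPΩ : P Ωᶜ = 0 := by
    rw [hPdef, withDensity_apply _ hΩc.measurableSet.compl,
      Measure.restrict_restrict hΩc.measurableSet.compl]
    simp [Set.compl_inter_self]
  have hμnull : (P.prod Q) ((Ω ×ˢ Ω')ᶜ) = 0 := by
    have hsub : (Ω ×ˢ Ω')ᶜ ⊆ (Ωᶜ ×ˢ (Set.univ : Set (EuclideanSpace ℝ (Fin d))))
        ∪ ((Set.univ : Set (EuclideanSpace ℝ (Fin d))) ×ˢ Ω'ᶜ) := by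
      rintro ⟨x, y⟩ hp
      simp only [Set.mem_compl_iff, Set.mem_prod, not_and_or] at hp
      rcases hp with h | h
      · exact Or.inl ⟨h, Set.mem_univ _⟩
      · exact Or.inr ⟨Set.mem_univ _, h⟩
    have hnull : (P.prod Q) ((Ωᶜ ×ˢ (Set.univ : Set (EuclideanSpace ℝ (Fin d))))
        ∪ ((Set.univ : Set (EuclideanSpace ℝ (Fin d))) ×ˢ Ω'ᶜ)) = 0 := by
      apply measure_union_null
      · rw [Measure.prod_prod, hPΩ, zero_mul]
      · rw [Measure.prod_prod, hQsupp, mul_zero]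
    exact measure_mono_null hsub hnull
  have hae : ∀ᵐ p ∂(P.prod Q), p ∈ Ω ×ˢ Ω' := by
    rw [ae_iff]
    have : {p : EuclideanSpace ℝ (Fin d) × EuclideanSpace ℝ (Fin d) | ¬ p ∈ Ω ×ˢ Ω'}
        = (Ω ×ˢ Ω')ᶜ := rfl
    rw [this]
    exact hμnull
  obtain ⟨B, hB⟩ := (hΩc.prod hΩ'c).exists_bound_of_continuousOn hc.continuous.continuousOn
  have hc'L2 : MemLp (Function.uncurry c) 2 (P.prod Q) := by
    apply MemLp.of_bound hc.continuous.aestronglyMeasurable B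
    filter_upwards [hae] with p hp
    exact hB p hp
  have hC2nn : 0 ≤ ∫ p, (Function.uncurry c p)^2 ∂(P.prod Q) :=
    integral_nonneg fun p => sq_nonneg _
  -- weak duality
  have hfeasprod := qot_prod_feasible P Q
  have hwd : ∀ (π : Measure (EuclideanSpace ℝ (Fin d) × EuclideanSpace ℝ (Fin d))),
      IsFeasible P Q π → ∀ (f g : EuclideanSpace ℝ (Fin d) → ℝ),
      MemLp f 2 P → MemLp g 2 Q → Gamma ε P Q c f g ≤ primalCost ε P Q c π :=
    fun π hπ f g hf hg => qot_weak_duality ε P Q c hε hc'L2 hπ hf hg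
  have hDSne : {v : ℝ | ∃ f g : EuclideanSpace ℝ (Fin d) → ℝ,
      MemLp f 2 P ∧ MemLp g 2 Q ∧ v = Gamma ε P Q c f g}.Nonempty :=
    ⟨Gamma ε P Q c 0 0, 0, 0, MemLp.zero, MemLp.zero, rfl⟩
  have hbddA : BddAbove {v : ℝ | ∃ f g : EuclideanSpace ℝ (Fin d) → ℝ,
      MemLp f 2 P ∧ MemLp g 2 Q ∧ v = Gamma ε P Q c f g} := by
    refine ⟨primalCost ε P Q c (P.prod Q), ?_⟩
    rintro v ⟨f, g, hf, hg, rfl⟩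
    exact hwd _ hfeasprod f g hf hg
  set D : ℝ := sSup {v : ℝ | ∃ f g : EuclideanSpace ℝ (Fin d) → ℝ,
      MemLp f 2 P ∧ MemLp g 2 Q ∧ v = Gamma ε P Q c f g} with hDdef
  have hΓleD : ∀ f g, MemLp f 2 P → MemLp g 2 Q → Gamma ε P Q c f g ≤ D :=
    fun f g hf hg => le_csSup hbddA ⟨f, g, hf, hg, rfl⟩
  have hPSne : {v : ℝ | ∃ π, IsFeasible P Q π ∧ v = primalCost ε P Q c π}.Nonempty :=
    ⟨primalCost ε P Q c (P.prod Q), P.prod Q, hfeasprod, rfl⟩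
  have hbddB : BddBelow {v : ℝ | ∃ π, IsFeasible P Q π ∧ v = primalCost ε P Q c π} := by
    refine ⟨Gamma ε P Q c 0 0, ?_⟩
    rintro v ⟨π, hπ, rfl⟩
    exact hwd π hπ 0 0 MemLp.zero MemLp.zero
  have hzeroP : ∫ x, (0 : EuclideanSpace ℝ (Fin d) → ℝ) x ∂P = 0 := by simp
  have hzeroQ : ∫ y, (0 : EuclideanSpace ℝ (Fin d) → ℝ) y ∂Q = 0 := by simp
  apply le_antisymm
  swap
  · -- sSup ≤ sInf (weak duality)
    apply le_csInf hPSne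
    rintro v ⟨π, hπ, rfl⟩
    apply csSup_le hDSne
    rintro w ⟨f, g, hf, hg, rfl⟩
    exact hwd π hπ f g hf hg
  -- sInf ≤ D : the hard direction
  -- the separation set
  set S : Set ((Lp ℝ 2 (P.prod Q)) × ℝ) := {pt | ∃ f g : EuclideanSpace ℝ (Fin d) → ℝ,
    MemLp f 2 P ∧ MemLp g 2 Q ∧
    Kfun ε (P.prod Q) (Function.uncurry c) (fun q => f q.1 + g q.2 + pt.1 q) -
      ((∫ x, f x ∂P) + (∫ y, g y ∂Q)) < pt.2} with hSdef
  have hSconv : Convex ℝ S := by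
    rintro ⟨u₁, t₁⟩ ⟨f₁, g₁, hf₁, hg₁, h₁⟩ ⟨u₂, t₂⟩ ⟨f₂, g₂, hf₂, hg₂, h₂⟩ a b ha hb hab
    refine ⟨fun x => a * f₁ x + b * f₂ x, fun y => a * g₁ y + b * g₂ y,
      (hf₁.const_mul a).add (hf₂.const_mul b), (hg₁.const_mul a).add (hg₂.const_mul b), ?_⟩
    have hv₁ : MemLp (fun q : EuclideanSpace ℝ (Fin d) × EuclideanSpace ℝ (Fin d) =>
        f₁ q.1 + g₁ q.2 + u₁ q) 2 (P.prod Q) :=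
      ((qot_memℒp_fst P Q hf₁).add (qot_memℒp_snd P Q hg₁)).add (Lp.memLp u₁)
    have hv₂ : MemLp (fun q : EuclideanSpace ℝ (Fin d) × EuclideanSpace ℝ (Fin d) =>
        f₂ q.1 + g₂ q.2 + u₂ q) 2 (P.prod Q) :=
      ((qot_memℒp_fst P Q hf₂).add (qot_memℒp_snd P Q hg₂)).add (Lp.memLp u₂)
    simp only [Prod.smul_fst, Prod.smul_snd, Prod.fst_add, Prod.snd_add, smul_eq_mul]
    have hcoe : ⇑(a • u₁ + b • u₂) =ᵐ[P.prod Q] fun q => a * u₁ q + b * u₂ q := by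
      filter_upwards [Lp.coeFn_add (a • u₁) (b • u₂), Lp.coeFn_smul a u₁, Lp.coeFn_smul b u₂]
        with q hq1 hq2 hq3
      rw [hq1]
      simp only [Pi.add_apply]
      rw [hq2, hq3]
      simp [smul_eq_mul]
    have hKcongr : Kfun ε (P.prod Q) (Function.uncurry c)
        (fun q => (a * f₁ q.1 + b * f₂ q.1) + (a * g₁ q.2 + b * g₂ q.2) + (a • u₁ + b • u₂) q)
        = Kfun ε (P.prod Q) (Function.uncurry c)
        (fun q => a * (f₁ q.1 + g₁ q.2 + u₁ q) + b * (f₂ q.1 + g₂ q.2 + u₂ q)) := by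
      apply Kfun_congr _ ε
      filter_upwards [hcoe] with q hq
      rw [hq]
      ring
    rw [hKcongr]
    have hK := Kfun_combo ε hε hc'L2 hv₁ hv₂ ha hb hab
    -- integrals of combined potentials
    have hintf : ∫ x, (a * f₁ x + b * f₂ x) ∂P = a * ∫ x, f₁ x ∂P + b * ∫ x, f₂ x ∂P := by
      rw [integral_add ((hf₁.integrable one_le_two).const_mul a)
        ((hf₂.integrable one_le_two).const_mul b), integral_const_mul, integral_const_mul]
    have hintg : ∫ y, (a * g₁ y + b * g₂ y) ∂Q = a * ∫ y, g₁ y ∂Q + b * ∫ y, g₂ y ∂Q := by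
      rw [integral_add ((hg₁.integrable one_le_two).const_mul a)
        ((hg₂.integrable one_le_two).const_mul b), integral_const_mul, integral_const_mul]
    rw [hintf, hintg]
    rcases eq_or_lt_of_le ha with ha0 | ha0
    · have hb1 : b = 1 := by linarith
      rw [← ha0, hb1] at hK ⊢
      simp only [zero_mul, one_mul, zero_add] at hK ⊢
      have := Kfun_nonneg (μ := P.prod Q) (c' := Function.uncurry c)
        (v := fun q : EuclideanSpace ℝ (Fin d) × EuclideanSpace ℝ (Fin d) =>
          f₁ q.1 + g₁ q.2 + u₁ q) ε hε
      linarith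
    · have h1 : a * (Kfun ε (P.prod Q) (Function.uncurry c)
          (fun q => f₁ q.1 + g₁ q.2 + u₁ q) - ((∫ x, f₁ x ∂P) + ∫ y, g₁ y ∂Q)) < a * t₁ :=
        mul_lt_mul_of_pos_left h₁ ha0
      have h2 : b * (Kfun ε (P.prod Q) (Function.uncurry c)
          (fun q => f₂ q.1 + g₂ q.2 + u₂ q) - ((∫ x, f₂ x ∂P) + ∫ y, g₂ y ∂Q)) ≤ b * t₂ :=
        mul_le_mul_of_nonneg_left h₂.le hb
      linarith
  have hSball : ∀ (u : Lp ℝ 2 (P.prod Q)) (t : ℝ), ‖u‖ < 1 →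
      (1/ε) * (1 + ∫ p, (Function.uncurry c p)^2 ∂(P.prod Q)) < t → (u, t) ∈ S := by
    intro u t hu ht
    refine ⟨0, 0, MemLp.zero, MemLp.zero, ?_⟩
    have h0 : (fun q : EuclideanSpace ℝ (Fin d) × EuclideanSpace ℝ (Fin d) =>
        (0 : EuclideanSpace ℝ (Fin d) → ℝ) q.1 + (0 : EuclideanSpace ℝ (Fin d) → ℝ) q.2 + u q)
        = ⇑u := by
      funext q; simp
    rw [h0, hzeroP, hzeroQ]
    have hK := qot_Kfun_ball_bound ε hε hc'L2 u
    have hnorm : ‖u‖^2 ≤ 1 := by nlinarith [norm_nonneg u]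
    have : (1/ε) * (‖u‖^2 + ∫ p, (Function.uncurry c p)^2 ∂(P.prod Q))
        ≤ (1/ε) * (1 + ∫ p, (Function.uncurry c p)^2 ∂(P.prod Q)) := by
      apply mul_le_mul_of_nonneg_left _ (by positivity)
      linarith
    linarith
  have hSnot : ((0 : Lp ℝ 2 (P.prod Q)), -D) ∉ S := by
    rintro ⟨f, g, hf, hg, hlt⟩
    have hcongr : Kfun ε (P.prod Q) (Function.uncurry c)
        (fun q => f q.1 + g q.2 + (0 : Lp ℝ 2 (P.prod Q)) q)
        = Kfun ε (P.prod Q) (Function.uncurry c) (fun q => f q.1 + g q.2) := by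
      apply Kfun_congr _ ε
      filter_upwards [Lp.coeFn_zero (E := ℝ) (p := 2) (μ := P.prod Q)] with q hq
      rw [hq]
      simp
    rw [hcongr] at hlt
    have hsplit := qot_gamma_split ε P Q c hε hc'L2 hf hg
    have hle := hΓleD f g hf hg
    rw [hsplit] at hle
    simp only at hlt hle
    linarith
  obtain ⟨h₀, hsub⟩ := qot_exists_subgradient S hSconv 1
    ((1/ε) * (1 + ∫ p, (Function.uncurry c p)^2 ∂(P.prod Q))) (-D) one_pos hSball hSnot
  have hstar : ∀ (f g : EuclideanSpace ℝ (Fin d) → ℝ), MemLp f 2 P → MemLp g 2 Q →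
      ∀ u : Lp ℝ 2 (P.prod Q), -D + ⟪h₀, u⟫ ≤
      Kfun ε (P.prod Q) (Function.uncurry c) (fun q => f q.1 + g q.2 + u q) -
        ((∫ x, f x ∂P) + (∫ y, g y ∂Q)) := by
    intro f g hf hg u
    apply qot_le_of_forall_pos_le_add
    intro δ hδ
    have := hsub u (Kfun ε (P.prod Q) (Function.uncurry c) (fun q => f q.1 + g q.2 + u q) -
      ((∫ x, f x ∂P) + (∫ y, g y ∂Q)) + δ) ⟨f, g, hf, hg, by simp only; linarith⟩
    linarith
  have hH2 : MemLp (⇑h₀) 2 (P.prod Q) := Lp.memLp h₀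
  have hH1 : Integrable (⇑h₀) (P.prod Q) := hH2.integrable one_le_two
  have hHm : StronglyMeasurable (⇑h₀) := Lp.stronglyMeasurable h₀
  -- (I) nonnegativity of h₀
  have hAmeas : MeasurableSet {p : EuclideanSpace ℝ (Fin d) × EuclideanSpace ℝ (Fin d) |
      h₀ p < 0} := measurableSet_lt hHm.measurable measurable_const
  have h0nn : ∀ᵐ p ∂(P.prod Q), 0 ≤ h₀ p := by
    set A := {p : EuclideanSpace ℝ (Fin d) × EuclideanSpace ℝ (Fin d) | h₀ p < 0} with hAdef
    have hwL2 : MemLp (A.indicator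
        (1 : EuclideanSpace ℝ (Fin d) × EuclideanSpace ℝ (Fin d) → ℝ)) 2 (P.prod Q) := by
      apply MemLp.of_bound ((stronglyMeasurable_const.indicator hAmeas).aestronglyMeasurable) 1
      filter_upwards with p
      by_cases hp : p ∈ A
      · rw [Set.indicator_of_mem hp]; exact norm_one.le
      · rw [Set.indicator_of_notMem hp, norm_zero]; norm_num
    have hkey : ∀ t : ℝ, 0 ≤ t →
        t * (- ∫ p in A, h₀ p ∂(P.prod Q)) ≤ D - ∫ p, h₀ p * Function.uncurry c p ∂(P.prod Q) := by
      intro t ht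
      set Gt := fun p : EuclideanSpace ℝ (Fin d) × EuclideanSpace ℝ (Fin d) =>
        Function.uncurry c p - t * (A.indicator (1 : EuclideanSpace ℝ (Fin d) × EuclideanSpace ℝ (Fin d) → ℝ) p) with hGtdef
      have hGt : MemLp Gt 2 (P.prod Q) := hc'L2.sub (hwL2.const_mul t)
      have hs := hstar 0 0 MemLp.zero MemLp.zero (hGt.toLp Gt)
      have hKt : Kfun ε (P.prod Q) (Function.uncurry c)
          (fun q => (0 : EuclideanSpace ℝ (Fin d) → ℝ) q.1 +
            (0 : EuclideanSpace ℝ (Fin d) → ℝ) q.2 + (hGt.toLp Gt) q) = 0 := by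
        have h1 : Kfun ε (P.prod Q) (Function.uncurry c)
            (fun q => (0 : EuclideanSpace ℝ (Fin d) → ℝ) q.1 +
              (0 : EuclideanSpace ℝ (Fin d) → ℝ) q.2 + (hGt.toLp Gt) q)
            = Kfun ε (P.prod Q) (Function.uncurry c) Gt := by
          apply Kfun_congr _ ε
          filter_upwards [hGt.coeFn_toLp] with q hq
          simp [hq]
        rw [h1]
        unfold Kfun
        have hint0 : ∫ p, (max (Gt p - Function.uncurry c p) 0)^2 ∂(P.prod Q) = 0 := by
          have hz : (fun p : EuclideanSpace ℝ (Fin d) × EuclideanSpace ℝ (Fin d) =>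
              (max (Gt p - Function.uncurry c p) 0)^2) = fun _ => 0 := by
            funext p
            have hw0 : 0 ≤ A.indicator
                (1 : EuclideanSpace ℝ (Fin d) × EuclideanSpace ℝ (Fin d) → ℝ) p := by
              by_cases hp : p ∈ A <;>
                simp [Set.indicator_of_mem, Set.indicator_of_notMem, hp]
            have he : Gt p - Function.uncurry c p
                = -(t * A.indicator
                  (1 : EuclideanSpace ℝ (Fin d) × EuclideanSpace ℝ (Fin d) → ℝ) p) := by
              rw [hGtdef]; ring
            rw [he, max_eq_right (by nlinarith)]
            simp
          rw [hz, integral_zero]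
        rw [hint0, mul_zero]
      have hin : ⟪h₀, hGt.toLp Gt⟫ = ∫ p, h₀ p * Function.uncurry c p ∂(P.prod Q)
          - t * ∫ p in A, h₀ p ∂(P.prod Q) := by
        rw [qot_inner_eq]
        have h2 : ∫ p, h₀ p * (hGt.toLp Gt) p ∂(P.prod Q) = ∫ p, h₀ p * Gt p ∂(P.prod Q) := by
          apply integral_congr_ae
          filter_upwards [hGt.coeFn_toLp] with q hq
          rw [hq]
        rw [h2]
        have hexp : (fun p : EuclideanSpace ℝ (Fin d) × EuclideanSpace ℝ (Fin d)
            => h₀ p * Gt p) = fun p => h₀ p * Function.uncurry c p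
              - t * (A.indicator (⇑h₀) p) := by
          funext p
          by_cases hp : p ∈ A <;>
            simp [hGtdef, Set.indicator_of_mem, Set.indicator_of_notMem, hp] <;> ring
        rw [hexp, integral_sub (qot_integrable_mul_L2 hH2 hc'L2)
          ((hH1.indicator hAmeas).const_mul t), integral_const_mul, integral_indicator hAmeas]
      rw [hKt, hin, hzeroP, hzeroQ] at hs
      linarith
    have hIA : 0 ≤ ∫ p in A, h₀ p ∂(P.prod Q) := by
      have := qot_nonpos_of_forall_nonneg_mul_le (fun t ht => hkey t ht)
      linarith
    -- conclude μ A = 0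
    have hnonneg_on : 0 ≤ᵐ[(P.prod Q).restrict A] (fun p => -h₀ p) := by
      filter_upwards [ae_restrict_mem hAmeas] with p hp
      simp only [hAdef, Set.mem_setOf_eq] at hp
      simp
      linarith
    have hint : Integrable (fun p => -h₀ p) ((P.prod Q).restrict A) := hH1.neg.restrict
    have hzero : ∫ p in A, -h₀ p ∂(P.prod Q) = 0 := by
      have hle : ∫ p in A, -h₀ p ∂(P.prod Q) ≤ 0 := by
        rw [integral_neg]; linarith
      have hge : 0 ≤ ∫ p in A, -h₀ p ∂(P.prod Q) := integral_nonneg_of_ae hnonneg_on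
      linarith
    have haez := (integral_eq_zero_iff_of_nonneg_ae hnonneg_on hint).mp hzero
    have hA0 : (P.prod Q) A = 0 := by
      have h3 : ∀ᵐ p ∂(P.prod Q).restrict A, False := by
        filter_upwards [haez, ae_restrict_mem hAmeas] with p hp1 hp2
        simp only [hAdef, Set.mem_setOf_eq] at hp2
        simp only [Pi.zero_apply] at hp1
        linarith
      have h4 := ae_iff.mp h3
      simpa using h4
    rw [ae_iff]
    have : {p : EuclideanSpace ℝ (Fin d) × EuclideanSpace ℝ (Fin d) | ¬ (0:ℝ) ≤ h₀ p} = A := by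
      ext p; simp [hAdef, not_le]
    rw [this]
    exact hA0
  -- (II) marginal identities
  have hmargP : ∀ (f : EuclideanSpace ℝ (Fin d) → ℝ), MemLp f 2 P →
      ∫ p, h₀ p * f p.1 ∂(P.prod Q) = ∫ x, f x ∂P := by
    intro f hf
    have key : ∀ t : ℝ, t * ((∫ x, f x ∂P) - ∫ p, h₀ p * f p.1 ∂(P.prod Q)) ≤
        Kfun ε (P.prod Q) (Function.uncurry c)
          (fun _ : EuclideanSpace ℝ (Fin d) × EuclideanSpace ℝ (Fin d) => (0:ℝ)) + D := by
      intro t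
      have hft : MemLp (fun x => t * f x) 2 P := hf.const_mul t
      have hFt : MemLp (fun p : EuclideanSpace ℝ (Fin d) × EuclideanSpace ℝ (Fin d) =>
          -(t * f p.1)) 2 (P.prod Q) := (qot_memℒp_fst P Q hft).neg
      have hs := hstar _ 0 hft MemLp.zero (hFt.toLp _)
      have hK : Kfun ε (P.prod Q) (Function.uncurry c)
          (fun q => t * f q.1 + (0 : EuclideanSpace ℝ (Fin d) → ℝ) q.2 + (hFt.toLp _) q)
          = Kfun ε (P.prod Q) (Function.uncurry c)
            (fun _ : EuclideanSpace ℝ (Fin d) × EuclideanSpace ℝ (Fin d) => (0:ℝ)) := by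
        apply Kfun_congr _ ε
        filter_upwards [hFt.coeFn_toLp] with q hq
        rw [hq]
        simp
      have hin : ⟪h₀, hFt.toLp _⟫ = -(t * ∫ p, h₀ p * f p.1 ∂(P.prod Q)) := by
        rw [qot_inner_eq]
        have h2 : ∫ p, h₀ p * (hFt.toLp _) p ∂(P.prod Q)
            = ∫ p, -(t * (h₀ p * f p.1)) ∂(P.prod Q) := by
          apply integral_congr_ae
          filter_upwards [hFt.coeFn_toLp] with q hq
          rw [hq]; ring
        rw [h2, integral_neg, integral_const_mul]
      have hJ : ∫ x, t * f x ∂P = t * ∫ x, f x ∂P := integral_const_mul t f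
      rw [hK, hin, hJ, hzeroQ] at hs
      linarith
    have := qot_eq_zero_of_forall_mul_le key
    linarith
  have hmargQ : ∀ (g : EuclideanSpace ℝ (Fin d) → ℝ), MemLp g 2 Q →
      ∫ p, h₀ p * g p.2 ∂(P.prod Q) = ∫ y, g y ∂Q := by
    intro g hg
    have key : ∀ t : ℝ, t * ((∫ y, g y ∂Q) - ∫ p, h₀ p * g p.2 ∂(P.prod Q)) ≤
        Kfun ε (P.prod Q) (Function.uncurry c)
          (fun _ : EuclideanSpace ℝ (Fin d) × EuclideanSpace ℝ (Fin d) => (0:ℝ)) + D := by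
      intro t
      have hgt : MemLp (fun y => t * g y) 2 Q := hg.const_mul t
      have hGt : MemLp (fun p : EuclideanSpace ℝ (Fin d) × EuclideanSpace ℝ (Fin d) =>
          -(t * g p.2)) 2 (P.prod Q) := (qot_memℒp_snd P Q hgt).neg
      have hs := hstar 0 _ MemLp.zero hgt (hGt.toLp _)
      have hK : Kfun ε (P.prod Q) (Function.uncurry c)
          (fun q => (0 : EuclideanSpace ℝ (Fin d) → ℝ) q.1 + t * g q.2 + (hGt.toLp _) q)
          = Kfun ε (P.prod Q) (Function.uncurry c)
            (fun _ : EuclideanSpace ℝ (Fin d) × EuclideanSpace ℝ (Fin d) => (0:ℝ)) := by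
        apply Kfun_congr _ ε
        filter_upwards [hGt.coeFn_toLp] with q hq
        rw [hq]
        simp
      have hin : ⟪h₀, hGt.toLp _⟫ = -(t * ∫ p, h₀ p * g p.2 ∂(P.prod Q)) := by
        rw [qot_inner_eq]
        have h2 : ∫ p, h₀ p * (hGt.toLp _) p ∂(P.prod Q)
            = ∫ p, -(t * (h₀ p * g p.2)) ∂(P.prod Q) := by
          apply integral_congr_ae
          filter_upwards [hGt.coeFn_toLp] with q hq
          rw [hq]; ring
        rw [h2, integral_neg, integral_const_mul]
      have hJ : ∫ y, t * g y ∂Q = t * ∫ y, g y ∂Q := integral_const_mul t g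
      rw [hK, hin, hJ, hzeroP] at hs
      linarith
    have := qot_eq_zero_of_forall_mul_le key
    linarith
  -- (III) final bound on the primal value of the density h₀
  have hfinal : (∫ p, h₀ p * Function.uncurry c p ∂(P.prod Q))
      + (ε/2) * ∫ p, (h₀ p)^2 ∂(P.prod Q) ≤ D := by
    have hG : MemLp (fun p : EuclideanSpace ℝ (Fin d) × EuclideanSpace ℝ (Fin d) =>
        Function.uncurry c p + ε * h₀ p) 2 (P.prod Q) := hc'L2.add (hH2.const_mul ε)
    have hs := hstar 0 0 MemLp.zero MemLp.zero (hG.toLp _)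
    have hK : Kfun ε (P.prod Q) (Function.uncurry c)
        (fun q => (0 : EuclideanSpace ℝ (Fin d) → ℝ) q.1 +
          (0 : EuclideanSpace ℝ (Fin d) → ℝ) q.2 + (hG.toLp _) q)
        = (ε/2) * ∫ p, (h₀ p)^2 ∂(P.prod Q) := by
      have h1 : Kfun ε (P.prod Q) (Function.uncurry c)
          (fun q => (0 : EuclideanSpace ℝ (Fin d) → ℝ) q.1 +
            (0 : EuclideanSpace ℝ (Fin d) → ℝ) q.2 + (hG.toLp _) q)
          = Kfun ε (P.prod Q) (Function.uncurry c)
            (fun p => Function.uncurry c p + ε * h₀ p) := by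
        apply Kfun_congr _ ε
        filter_upwards [hG.coeFn_toLp] with q hq
        simp [hq]
      rw [h1]
      unfold Kfun
      have h2 : ∫ p, (max ((Function.uncurry c p + ε * h₀ p) - Function.uncurry c p) 0)^2
          ∂(P.prod Q) = ∫ p, ε^2 * (h₀ p)^2 ∂(P.prod Q) := by
        apply integral_congr_ae
        filter_upwards [h0nn] with p hp
        have he : (Function.uncurry c p + ε * h₀ p) - Function.uncurry c p = ε * h₀ p := by ring
        rw [he, max_eq_left (by positivity)]
        ring
      rw [h2, integral_const_mul]
      field_simp
    have hin : ⟪h₀, hG.toLp _⟫ = (∫ p, h₀ p * Function.uncurry c p ∂(P.prod Q))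
        + ε * ∫ p, (h₀ p)^2 ∂(P.prod Q) := by
      rw [qot_inner_eq]
      have h2 : ∫ p, h₀ p * (hG.toLp _) p ∂(P.prod Q)
          = ∫ p, (h₀ p * Function.uncurry c p + ε * (h₀ p)^2) ∂(P.prod Q) := by
        apply integral_congr_ae
        filter_upwards [hG.coeFn_toLp] with q hq
        rw [hq]; ring
      rw [h2, integral_add (qot_integrable_mul_L2 hH2 hc'L2)
        (hH2.integrable_sq.const_mul ε), integral_const_mul]
    rw [hK, hin, hzeroP, hzeroQ] at hs
    linarith
  -- (IV) the optimal coupling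
  have hHdensMeas : Measurable (fun p : EuclideanSpace ℝ (Fin d) × EuclideanSpace ℝ (Fin d) =>
      ENNReal.ofReal (h₀ p)) := ENNReal.measurable_ofReal.comp hHm.measurable
  set π₀ := (P.prod Q).withDensity (fun p => ENNReal.ofReal (h₀ p)) with hπ₀def
  have hrn : π₀.rnDeriv (P.prod Q) =ᵐ[P.prod Q] (fun p => ENNReal.ofReal (h₀ p)) :=
    Measure.rnDeriv_withDensity (P.prod Q) hHdensMeas
  have hrnreal : (fun p => (π₀.rnDeriv (P.prod Q) p).toReal) =ᵐ[P.prod Q] ⇑h₀ := by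
    filter_upwards [hrn, h0nn] with p hp1 hp2
    rw [hp1]
    exact ENNReal.toReal_ofReal hp2
  have hπ₀fst : π₀.fst = P := by
    ext s hs
    rw [Measure.fst_apply hs, hπ₀def, withDensity_apply _ (measurable_fst hs)]
    have hind : MemLp (s.indicator (1 : EuclideanSpace ℝ (Fin d) → ℝ)) 2 P := by
      apply MemLp.of_bound ((stronglyMeasurable_const.indicator hs).aestronglyMeasurable) 1
      filter_upwards with x
      by_cases hx : x ∈ s
      · rw [Set.indicator_of_mem hx]; exact norm_one.le
      · rw [Set.indicator_of_notMem hx, norm_zero]; norm_num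
    have hm := hmargP _ hind
    rw [integral_indicator_one hs] at hm
    have heq : ∫ p, h₀ p * (s.indicator (1 : EuclideanSpace ℝ (Fin d) → ℝ) p.1) ∂(P.prod Q)
        = ∫ p in Prod.fst ⁻¹' s, h₀ p ∂(P.prod Q) := by
      rw [← integral_indicator (measurable_fst hs)]
      congr 1
      funext p
      by_cases hp : p.1 ∈ s <;>
        simp [Set.indicator_of_mem, Set.indicator_of_notMem, hp, Set.mem_preimage]
    rw [heq] at hm
    rw [← ofReal_integral_eq_lintegral_ofReal (hH1.restrict) (ae_restrict_of_ae h0nn)]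
    rw [hm, measureReal_def, ENNReal.ofReal_toReal (measure_ne_top P s)]
  have hπ₀snd : π₀.snd = Q := by
    ext s hs
    rw [Measure.snd_apply hs, hπ₀def, withDensity_apply _ (measurable_snd hs)]
    have hind : MemLp (s.indicator (1 : EuclideanSpace ℝ (Fin d) → ℝ)) 2 Q := by
      apply MemLp.of_bound ((stronglyMeasurable_const.indicator hs).aestronglyMeasurable) 1
      filter_upwards with x
      by_cases hx : x ∈ s
      · rw [Set.indicator_of_mem hx]; exact norm_one.le
      · rw [Set.indicator_of_notMem hx, norm_zero]; norm_num
    have hm := hmargQ _ hind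
    rw [integral_indicator_one hs] at hm
    have heq : ∫ p, h₀ p * (s.indicator (1 : EuclideanSpace ℝ (Fin d) → ℝ) p.2) ∂(P.prod Q)
        = ∫ p in Prod.snd ⁻¹' s, h₀ p ∂(P.prod Q) := by
      rw [← integral_indicator (measurable_snd hs)]
      congr 1
      funext p
      by_cases hp : p.2 ∈ s <;>
        simp [Set.indicator_of_mem, Set.indicator_of_notMem, hp, Set.mem_preimage]
    rw [heq] at hm
    rw [← ofReal_integral_eq_lintegral_ofReal (hH1.restrict) (ae_restrict_of_ae h0nn)]
    rw [hm, measureReal_def, ENNReal.ofReal_toReal (measure_ne_top Q s)]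
  have hπ₀prob : IsProbabilityMeasure π₀ := by
    constructor
    rw [← Measure.fst_univ, hπ₀fst]
    exact measure_univ
  haveI := hπ₀prob
  have hπ₀feas : IsFeasible P Q π₀ :=
    ⟨hπ₀prob, hπ₀fst, hπ₀snd, withDensity_absolutelyContinuous _ _, hH2.ae_eq hrnreal.symm⟩
  have hcost : primalCost ε P Q c π₀ ≤ D := by
    unfold primalCost
    have h1 : ∫ p, ((π₀.rnDeriv (P.prod Q) p).toReal)^2 ∂(P.prod Q)
        = ∫ p, (h₀ p)^2 ∂(P.prod Q) := by
      apply integral_congr_ae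
      filter_upwards [hrnreal] with p hp
      rw [hp]
    have h2 : ∫ p, c p.1 p.2 ∂π₀ = ∫ p, h₀ p * Function.uncurry c p ∂(P.prod Q) := by
      have h3 := MeasureTheory.integral_rnDeriv_smul (μ := π₀) (ν := P.prod Q)
        (withDensity_absolutelyContinuous _ _)
        (f := fun p : EuclideanSpace ℝ (Fin d) × EuclideanSpace ℝ (Fin d) => c p.1 p.2)
      rw [← h3]
      apply integral_congr_ae
      filter_upwards [hrnreal] with p hp
      rw [smul_eq_mul, hp]
      rfl
    rw [h1, h2]
    exact hfinal
  calc sInf {v : ℝ | ∃ π, IsFeasible P Q π ∧ v = primalCost ε P Q c π}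
      ≤ primalCost ε P Q c π₀ := csInf_le hbddB ⟨π₀, hπ₀feas, rfl⟩
    _ ≤ D := hcost
end

section
/- Explicit projection onto the space of direct sums: for every h ∈ L²(P⊗Q), define h_P(x) := ∫ h(x,y) dQ(y), h_Q(y) := ∫ h(x,y) dP(x), and h̄ := ∫ h d(P⊗Q). Then the function (x,y) ↦ h_P(x) + h_Q(y) − h̄ belongs to H, and h − (h_P ⊕ h_Q − h̄) is orthogonal in L²(P⊗Q) to every element of H; that is, h_P ⊕ h_Q − h̄ is the orthogonal projection of h onto H. -/
open MeasureTheory Metric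
open scoped ENNReal

private lemma marginal_memL2 {α β : Type*} [MeasurableSpace α] [MeasurableSpace β]
    {μ : Measure α} {ν : Measure β} [IsProbabilityMeasure μ] [IsProbabilityMeasure ν]
    {h : α × β → ℝ} (hmeas : Measurable h) (hL2 : MemLp h 2 (μ.prod ν)) :
    MemLp (fun x => ∫ y, h (x, y) ∂ν) 2 μ := by
  refine ⟨(hmeas.stronglyMeasurable.integral_prod_right').aestronglyMeasurable, ?_⟩
  rw [eLpNorm_eq_lintegral_rpow_enorm_toReal two_ne_zero ENNReal.ofNat_ne_top]
  have htop : ∫⁻ p, (‖h p‖₊ : ℝ≥0∞) ^ (2:ℝ≥0∞).toReal ∂(μ.prod ν) < ⊤ := by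
    have h2 := hL2.2
    rw [eLpNorm_eq_lintegral_rpow_enorm_toReal two_ne_zero ENNReal.ofNat_ne_top] at h2
    exact (ENNReal.rpow_lt_top_iff_of_pos (by norm_num : (0:ℝ) < 1 / (2:ℝ≥0∞).toReal)).mp h2
  have key : ∫⁻ x, (‖∫ y, h (x, y) ∂ν‖₊ : ℝ≥0∞) ^ (2:ℝ≥0∞).toReal ∂μ
      ≤ ∫⁻ p, (‖h p‖₊ : ℝ≥0∞) ^ (2:ℝ≥0∞).toReal ∂(μ.prod ν) := by
    have hT : (2:ℝ≥0∞).toReal = 2 := by simp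
    rw [lintegral_prod _ ((hmeas.nnnorm.coe_nnreal_ennreal.pow_const _).aemeasurable)]
    refine lintegral_mono fun x => ?_
    calc (‖∫ y, h (x, y) ∂ν‖₊ : ℝ≥0∞) ^ (2:ℝ≥0∞).toReal
        ≤ (∫⁻ y, ‖h (x, y)‖₊ ∂ν) ^ (2:ℝ≥0∞).toReal := by
          exact ENNReal.rpow_le_rpow (enorm_integral_le_lintegral_enorm _) (by simp)
      _ ≤ ∫⁻ y, (‖h (x, y)‖₊ : ℝ≥0∞) ^ (2:ℝ≥0∞).toReal ∂ν := by
          rw [hT]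
          have hcs := ENNReal.lintegral_mul_le_Lp_mul_Lq ν
            Real.HolderConjugate.two_two
            (f := fun y => (‖h (x, y)‖₊ : ℝ≥0∞)) (g := fun _ => (1:ℝ≥0∞))
            ((hmeas.comp measurable_prodMk_left).nnnorm.coe_nnreal_ennreal.aemeasurable)
            aemeasurable_const
          simp only [Pi.mul_apply, mul_one, lintegral_one, measure_univ, ENNReal.one_rpow,
            one_mul, ENNReal.rpow_one] at hcs
          calc (∫⁻ y, (‖h (x, y)‖₊:ℝ≥0∞) ∂ν) ^ (2:ℝ)
              ≤ ((∫⁻ y, (‖h (x, y)‖₊:ℝ≥0∞) ^ (2:ℝ) ∂ν) ^ (1/2:ℝ)) ^ (2:ℝ) :=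
                ENNReal.rpow_le_rpow hcs (by norm_num)
            _ = ∫⁻ y, (‖h (x, y)‖₊:ℝ≥0∞) ^ (2:ℝ) ∂ν := by
                rw [← ENNReal.rpow_mul]; norm_num
  exact ENNReal.rpow_lt_top_of_nonneg (by positivity) (key.trans_lt htop).ne

private lemma integral_mul_fst_eq_zero {α β : Type*} [MeasurableSpace α] [MeasurableSpace β]
    {μ : Measure α} {ν : Measure β} [SFinite μ] [SFinite ν]
    {w : α × β → ℝ} {u : α → ℝ} (hint : Integrable (fun p => w p * u p.1) (μ.prod ν))
    (hz : ∀ᵐ x ∂μ, ∫ y, w (x, y) ∂ν = 0) : ∫ p, w p * u p.1 ∂(μ.prod ν) = 0 := by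
  rw [MeasureTheory.integral_prod _ hint]
  refine integral_eq_zero_of_ae ?_
  filter_upwards [hz] with x hx
  have : (fun y => w (x, y) * u (x, y).1) = fun y => w (x, y) * u x := rfl
  rw [this, integral_mul_const, hx, zero_mul]; rfl

private lemma integral_mul_snd_eq_zero {α β : Type*} [MeasurableSpace α] [MeasurableSpace β]
    {μ : Measure α} {ν : Measure β} [SFinite μ] [SFinite ν]
    {w : α × β → ℝ} {v : β → ℝ} (hint : Integrable (fun p => w p * v p.2) (μ.prod ν))
    (hz : ∀ᵐ y ∂ν, ∫ x, w (x, y) ∂μ = 0) : ∫ p, w p * v p.2 ∂(μ.prod ν) = 0 := by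
  rw [MeasureTheory.integral_prod_symm _ hint]
  refine integral_eq_zero_of_ae ?_
  filter_upwards [hz] with y hy
  have : (fun x => w (x, y) * v (x, y).2) = fun x => w (x, y) * v y := rfl
  rw [this, integral_mul_const, hy, zero_mul]; rfl


/-- Explicit orthogonal projection onto the space of direct sums (Lemma 3.4, proof):
for `h ∈ L²(P ⊗ Q)`, the function `h_P ⊕ h_Q - h̄` lies in
`H = {u ⊕ v : u ∈ L²(P), v ∈ L²(Q)}` and `h - (h_P ⊕ h_Q - h̄)` is orthogonal to `H`;
hence `h_P ⊕ h_Q - h̄` is the orthogonal projection of `h` onto `H`. -/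
theorem projection_onto_direct_sums
    (d : ℕ)
    (Ω Ω' : Set (EuclideanSpace ℝ (Fin d)))
    (hΩc : IsCompact Ω) (hΩ'c : IsCompact Ω')
    (P Q : Measure (EuclideanSpace ℝ (Fin d)))
    [IsProbabilityMeasure P] [IsProbabilityMeasure Q]
    (hPsupp : P Ωᶜ = 0) (hQsupp : Q Ω'ᶜ = 0)
    (h : EuclideanSpace ℝ (Fin d) × EuclideanSpace ℝ (Fin d) → ℝ)
    (hmeas : Measurable h) (hL2 : MemLp h 2 (P.prod Q)) :
    -- h_P ⊕ h_Q - h̄ belongs to H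
    (∃ u v : EuclideanSpace ℝ (Fin d) → ℝ, MemLp u 2 P ∧ MemLp v 2 Q ∧
      (∀ᵐ p ∂(P.prod Q),
        (∫ y, h (p.1, y) ∂Q) + (∫ x, h (x, p.2) ∂P) - (∫ q, h q ∂(P.prod Q)) =
          u p.1 + v p.2)) ∧
    -- h - (h_P ⊕ h_Q - h̄) is orthogonal to every element u ⊕ v of H
    (∀ u v : EuclideanSpace ℝ (Fin d) → ℝ, MemLp u 2 P → MemLp v 2 Q →
      ∫ p, (h p - ((∫ y, h (p.1, y) ∂Q) + (∫ x, h (x, p.2) ∂P) - (∫ q, h q ∂(P.prod Q)))) *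
          (u p.1 + v p.2) ∂(P.prod Q) = 0) := by
  set hP : EuclideanSpace ℝ (Fin d) → ℝ := fun x => ∫ y, h (x, y) ∂Q with hP_def
  set hQf : EuclideanSpace ℝ (Fin d) → ℝ := fun y => ∫ x, h (x, y) ∂P with hQf_def
  set c : ℝ := ∫ q, h q ∂(P.prod Q) with c_def
  have hint : Integrable h (P.prod Q) := hL2.integrable one_le_two
  -- L² facts for the marginals
  have hPmem : MemLp hP 2 P := marginal_memL2 hmeas hL2
  have hswapL2 : MemLp (h ∘ Prod.swap) 2 (Q.prod P) :=
    hL2.comp_measurePreserving Measure.measurePreserving_swap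
  have hQmem : MemLp hQf 2 Q :=
    marginal_memL2 (hmeas.comp measurable_swap) hswapL2
  have hmpfst : MeasurePreserving Prod.fst (P.prod Q) P := ⟨measurable_fst, by simp⟩
  have hmpsnd : MeasurePreserving Prod.snd (P.prod Q) Q := ⟨measurable_snd, by simp⟩
  have hPfst : MemLp (fun p : _ × _ => hP p.1) 2 (P.prod Q) :=
    hPmem.comp_measurePreserving hmpfst
  have hQsnd : MemLp (fun p : _ × _ => hQf p.2) 2 (P.prod Q) :=
    hQmem.comp_measurePreserving hmpsnd
  -- the remainder w
  set w : EuclideanSpace ℝ (Fin d) × EuclideanSpace ℝ (Fin d) → ℝ :=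
    fun p => h p - (hP p.1 + hQf p.2 - c) with w_def
  have hwmem : MemLp w 2 (P.prod Q) :=
    hL2.sub ((hPfst.add hQsnd).sub (memLp_const c))
  -- slice integrals of w vanish
  have hc_snd : ∫ y, hQf y ∂Q = c := (MeasureTheory.integral_prod_symm h hint).symm
  have hc_fst : ∫ x, hP x ∂P = c := (MeasureTheory.integral_prod h hint).symm
  have hQint : Integrable hQf Q := hQmem.integrable one_le_two
  have hPint : Integrable hP P := hPmem.integrable one_le_two
  have hz1 : ∀ᵐ x ∂P, ∫ y, w (x, y) ∂Q = 0 := by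
    filter_upwards [hint.prod_right_ae] with x hx
    have e1 : (fun y => w (x, y)) = fun y => h (x, y) - ((hP x - c) + hQf y) := by
      funext y; simp only [w_def]; ring
    have ig1 : Integrable (fun y => (hP x - c) + hQf y) Q := (integrable_const _).add hQint
    rw [e1, integral_sub hx ig1, integral_add (integrable_const _) hQint, integral_const, hc_snd]
    simp [hP_def]
  have hz2 : ∀ᵐ y ∂Q, ∫ x, w (x, y) ∂P = 0 := by
    filter_upwards [hint.prod_left_ae] with y hy
    have e1 : (fun x => w (x, y)) = fun x => h (x, y) - ((hQf y - c) + hP x) := by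
      funext x; simp only [w_def]; ring
    have ig2 : Integrable (fun x => (hQf y - c) + hP x) P := (integrable_const _).add hPint
    rw [e1, integral_sub hy ig2, integral_add (integrable_const _) hPint, integral_const, hc_fst]
    simp [hQf_def]
  constructor
  · refine ⟨fun x => hP x - c, hQf, hPmem.sub (memLp_const c), hQmem, ?_⟩
    refine Filter.Eventually.of_forall fun p => ?_
    show hP p.1 + hQf p.2 - c = (hP p.1 - c) + hQf p.2
    ring
  · intro u v hu hv
    have hufst : MemLp (fun p : _ × _ => u p.1) 2 (P.prod Q) :=
      hu.comp_measurePreserving hmpfst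
    have hvsnd : MemLp (fun p : _ × _ => v p.2) 2 (P.prod Q) :=
      hv.comp_measurePreserving hmpsnd
    have hint1 : Integrable (fun p => w p * u p.1) (P.prod Q) := by
      have := memLp_one_iff_integrable.mp
        (hufst.smul hwmem (r := 1))
      simpa [smul_eq_mul, mul_comm, Pi.mul_def] using this
    have hint2 : Integrable (fun p => w p * v p.2) (P.prod Q) := by
      have := memLp_one_iff_integrable.mp
        (hvsnd.smul hwmem (r := 1))
      simpa [smul_eq_mul, mul_comm, Pi.mul_def] using this
    have I1 : ∫ p, w p * u p.1 ∂(P.prod Q) = 0 := integral_mul_fst_eq_zero hint1 hz1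
    have I2 : ∫ p, w p * v p.2 ∂(P.prod Q) = 0 := integral_mul_snd_eq_zero hint2 hz2
    have e : (fun p => w p * (u p.1 + v p.2))
        = fun p => w p * u p.1 + w p * v p.2 := by funext p; ring
    calc ∫ p, w p * (u p.1 + v p.2) ∂(P.prod Q)
        = ∫ p, (w p * u p.1 + w p * v p.2) ∂(P.prod Q) := by rw [e]
      _ = (∫ p, w p * u p.1 ∂(P.prod Q)) + ∫ p, w p * v p.2 ∂(P.prod Q) :=
          integral_add hint1 hint2
      _ = 0 := by rw [I1, I2, add_zero]
end

section
/- Lipschitz continuity of the dual gradient: for all (f,g), (u,v) ∈ L²(P) × L²(Q), ‖DΓ(f,g) − DΓ(u,v)‖_{L²(P)×L²(Q)} ≤ (2/ε)·‖(f−u, g−v)‖_{L²(P)×L²(Q)}. Moreover, for each fixed g the maps f ↦ D₁Γ(f,g) and f ↦ D₂Γ(f,g) are (1/ε)-Lipschitz from L²(P) to L²(P) and L²(Q) respectively, and for each fixed f the maps g ↦ D₁Γ(f,g) and g ↦ D₂Γ(f,g) are (1/ε)-Lipschitz from L²(Q) to L²(P) and L²(Q) respectively. -/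
open MeasureTheory Metric
open scoped ENNReal

/-- First gradient component `D₁Γ(f,g)(x) = 1 - (1/ε) ∫ (f(x)+g(y)-c(x,y))₊ dQ(y)`. -/
noncomputable def D1Gamma {d : ℕ} (ε : ℝ) (Q : Measure (EuclideanSpace ℝ (Fin d)))
    (c : EuclideanSpace ℝ (Fin d) → EuclideanSpace ℝ (Fin d) → ℝ)
    (f g : EuclideanSpace ℝ (Fin d) → ℝ) : EuclideanSpace ℝ (Fin d) → ℝ :=
  fun x => 1 - (1 / ε) * ∫ y, max (f x + g y - c x y) 0 ∂Q

/-- Second gradient component `D₂Γ(f,g)(y) = 1 - (1/ε) ∫ (f(x)+g(y)-c(x,y))₊ dP(x)`. -/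
noncomputable def D2Gamma {d : ℕ} (ε : ℝ) (P : Measure (EuclideanSpace ℝ (Fin d)))
    (c : EuclideanSpace ℝ (Fin d) → EuclideanSpace ℝ (Fin d) → ℝ)
    (f g : EuclideanSpace ℝ (Fin d) → ℝ) : EuclideanSpace ℝ (Fin d) → ℝ :=
  fun y => 1 - (1 / ε) * ∫ x, max (f x + g y - c x y) 0 ∂P

variable {α : Type*} [MeasurableSpace α] {μ : Measure α}

/-- Cauchy–Schwarz: `∫|h| ≤ sqrt ∫ h²` on a probability measure. -/
lemma l1_le_l2 [IsProbabilityMeasure μ] {h : α → ℝ} (hh : MemLp h 2 μ) :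
    ∫ x, |h x| ∂μ ≤ Real.sqrt (∫ x, h x ^ 2 ∂μ) := by
  set I := ∫ x, |h x| ∂μ with hI
  have hint : Integrable (fun x => |h x|) μ := (hh.integrable one_le_two).abs
  have hsq : Integrable (fun x => h x ^ 2) μ := hh.integrable_sq
  have hexp : ∫ x, (|h x| - I) ^ 2 ∂μ = (∫ x, h x ^ 2 ∂μ) - I ^ 2 := by
    have : ∀ x, (|h x| - I) ^ 2 = h x ^ 2 - (2 * I) * |h x| + I ^ 2 := by
      intro x; have := sq_abs (h x); nlinarith [sq_abs (h x)]
    rw [integral_congr_ae (Filter.Eventually.of_forall this)]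
    have h1 : Integrable (fun x => h x ^ 2 - 2 * I * |h x|) μ := hsq.sub (hint.const_mul _)
    rw [integral_add h1 (integrable_const _),
      integral_sub hsq (hint.const_mul (2 * I)), integral_const_mul, integral_const]
    simp [← hI]; ring
  have h0 : 0 ≤ ∫ x, (|h x| - I) ^ 2 ∂μ := integral_nonneg fun x => sq_nonneg _
  have hIle : I ^ 2 ≤ ∫ x, h x ^ 2 ∂μ := by linarith [hexp ▸ h0]
  have hInn : 0 ≤ I := integral_nonneg fun x => abs_nonneg _
  calc I = Real.sqrt (I ^ 2) := (Real.sqrt_sq hInn).symm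
    _ ≤ _ := Real.sqrt_le_sqrt hIle

/-- Key L² bound: a.e. pointwise bound `|h| ≤ C|a| + c₀` gives `‖h‖₂ ≤ C‖a‖₂ + c₀`. -/
lemma key [IsProbabilityMeasure μ] {h a : α → ℝ} {C c₀ : ℝ} (hC : 0 ≤ C) (hc₀ : 0 ≤ c₀)
    (ha : MemLp a 2 μ) (hb : ∀ᵐ x ∂μ, |h x| ≤ C * |a x| + c₀) :
    Real.sqrt (∫ x, h x ^ 2 ∂μ) ≤ C * Real.sqrt (∫ x, a x ^ 2 ∂μ) + c₀ := by
  set S := Real.sqrt (∫ x, a x ^ 2 ∂μ) with hS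
  have hSnn : 0 ≤ S := Real.sqrt_nonneg _
  have hS2 : S ^ 2 = ∫ x, a x ^ 2 ∂μ :=
    Real.sq_sqrt (integral_nonneg fun x => sq_nonneg _)
  have haint : Integrable (fun x => |a x|) μ := (ha.integrable one_le_two).abs
  have hasq : Integrable (fun x => a x ^ 2) μ := ha.integrable_sq
  have habs : ∫ x, |a x| ∂μ ≤ S := l1_le_l2 ha
  have hgint : Integrable (fun x => (C * |a x| + c₀) ^ 2) μ := by
    have : (fun x => (C * |a x| + c₀) ^ 2)
        = fun x => C ^ 2 * a x ^ 2 + (2 * C * c₀) * |a x| + c₀ ^ 2 := by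
      funext x; have := sq_abs (a x); nlinarith [sq_abs (a x)]
    rw [this]
    exact ((hasq.const_mul _).add (haint.const_mul _)).add (integrable_const _)
  have hmono : ∫ x, h x ^ 2 ∂μ ≤ ∫ x, (C * |a x| + c₀) ^ 2 ∂μ := by
    refine integral_mono_of_nonneg (Filter.Eventually.of_forall fun x => sq_nonneg _) hgint ?_
    filter_upwards [hb] with x hx
    have h1 : 0 ≤ C * |a x| + c₀ := by positivity
    nlinarith [abs_nonneg (h x), sq_abs (h x)]
  have hrhs : ∫ x, (C * |a x| + c₀) ^ 2 ∂μ ≤ (C * S + c₀) ^ 2 := by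
    have : (fun x => (C * |a x| + c₀) ^ 2)
        = fun x => C ^ 2 * a x ^ 2 + (2 * C * c₀) * |a x| + c₀ ^ 2 := by
      funext x; nlinarith [sq_abs (a x)]
    have h1 : Integrable (fun x => C ^ 2 * a x ^ 2) μ := hasq.const_mul _
    have h2 : Integrable (fun x => (2 * C * c₀) * |a x|) μ := haint.const_mul _
    have h12 : Integrable (fun x => C ^ 2 * a x ^ 2 + 2 * C * c₀ * |a x|) μ := h1.add h2
    rw [this, integral_add h12 (integrable_const _),
      integral_add h1 h2, integral_const_mul, integral_const_mul, integral_const]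
    simp only [measure_univ, ENNReal.toReal_one, one_smul, probReal_univ]
    rw [← hS2]
    nlinarith [mul_le_mul_of_nonneg_left habs (by positivity : (0:ℝ) ≤ 2 * C * c₀)]
  calc Real.sqrt (∫ x, h x ^ 2 ∂μ) ≤ Real.sqrt ((C * S + c₀) ^ 2) :=
      Real.sqrt_le_sqrt (le_trans hmono hrhs)
    _ = C * S + c₀ := Real.sqrt_sq (by positivity)

/-- Integrability of the truncated integrand against a compactly supported measure. -/
lemma max_int {d : ℕ} (μ : Measure (EuclideanSpace ℝ (Fin d))) [IsProbabilityMeasure μ]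
    {Ω : Set (EuclideanSpace ℝ (Fin d))} (hΩ : IsCompact Ω) (hsupp : μ Ωᶜ = 0)
    {φ : EuclideanSpace ℝ (Fin d) → ℝ} (hφ : MemLp φ 2 μ)
    {ψ : EuclideanSpace ℝ (Fin d) → ℝ} (hψ : Continuous ψ) (r : ℝ) :
    Integrable (fun z => max (φ z + r - ψ z) 0) μ := by
  obtain ⟨M, hM⟩ := hΩ.exists_bound_of_continuousOn hψ.continuousOn
  have hae : ∀ᵐ z ∂μ, z ∈ Ω := by
    rw [MeasureTheory.ae_iff]
    exact hsupp
  have hsm : AEStronglyMeasurable (fun z => max (φ z + r - ψ z) 0) μ :=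
    (((hφ.aestronglyMeasurable.aemeasurable.add aemeasurable_const).sub hψ.measurable.aemeasurable).max
      aemeasurable_const).aestronglyMeasurable
  have hbd : Integrable (fun z => |φ z| + (|r| + M)) μ :=
    (hφ.integrable one_le_two).abs.add (integrable_const _)
  refine hbd.mono' hsm ?_
  filter_upwards [hae] with z hz
  have h1 : |max (φ z + r - ψ z) 0| ≤ |φ z + r - ψ z| := by
    rw [abs_of_nonneg (le_max_right _ _)]
    exact max_le (le_abs_self _) (abs_nonneg _)
  have h2 : |φ z + r - ψ z| ≤ |φ z| + |r| + |ψ z| := by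
    calc |φ z + r - ψ z| ≤ |φ z + r| + |ψ z| := abs_sub _ _
      _ ≤ |φ z| + |r| + |ψ z| := by gcongr; exact abs_add_le _ _
  have h3 : |ψ z| ≤ M := by simpa [Real.norm_eq_abs] using hM z hz
  simp only [Real.norm_eq_abs]
  linarith

/-- Pointwise bound for the difference of first gradient components. -/
lemma D1_diff {d : ℕ} {ε : ℝ} (hε : 0 < ε) (Q : Measure (EuclideanSpace ℝ (Fin d)))
    [IsProbabilityMeasure Q]
    (c : EuclideanSpace ℝ (Fin d) → EuclideanSpace ℝ (Fin d) → ℝ)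
    (f g u v : EuclideanSpace ℝ (Fin d) → ℝ) (x : EuclideanSpace ℝ (Fin d))
    (hF : Integrable (fun y => max (f x + g y - c x y) 0) Q)
    (hG : Integrable (fun y => max (u x + v y - c x y) 0) Q)
    (hgv : Integrable (fun y => |g y - v y|) Q) :
    |D1Gamma ε Q c f g x - D1Gamma ε Q c u v x| ≤
      (1 / ε) * (|f x - u x| + ∫ y, |g y - v y| ∂Q) := by
  simp only [D1Gamma]
  have hrw : (1 - 1 / ε * ∫ y, max (f x + g y - c x y) 0 ∂Q) -
      (1 - 1 / ε * ∫ y, max (u x + v y - c x y) 0 ∂Q) =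
      (1 / ε) * ((∫ y, max (u x + v y - c x y) 0 ∂Q) -
        ∫ y, max (f x + g y - c x y) 0 ∂Q) := by ring
  rw [hrw, abs_mul, abs_of_nonneg (by positivity : (0:ℝ) ≤ 1 / ε)]
  gcongr
  rw [← integral_sub hG hF]
  have hRint : Integrable (fun y => |f x - u x| + |g y - v y|) Q :=
    (integrable_const _).add hgv
  calc |∫ y, (max (u x + v y - c x y) 0 - max (f x + g y - c x y) 0) ∂Q|
      ≤ ∫ y, |max (u x + v y - c x y) 0 - max (f x + g y - c x y) 0| ∂Q := by
        simpa [Real.norm_eq_abs] using norm_integral_le_integral_norm (μ := Q)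
          (fun y => max (u x + v y - c x y) 0 - max (f x + g y - c x y) 0)
    _ ≤ ∫ y, (|f x - u x| + |g y - v y|) ∂Q := by
        refine integral_mono (hG.sub hF).abs hRint fun y => ?_
        calc |max (u x + v y - c x y) 0 - max (f x + g y - c x y) 0|
            ≤ |(u x + v y - c x y) - (f x + g y - c x y)| := abs_max_sub_max_le_abs _ _ _
          _ = |(u x - f x) + (v y - g y)| := by ring_nf
          _ ≤ |u x - f x| + |v y - g y| := abs_add_le _ _
          _ = |f x - u x| + |g y - v y| := by rw [abs_sub_comm (u x), abs_sub_comm (v y)]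
    _ = |f x - u x| + ∫ y, |g y - v y| ∂Q := by
        rw [integral_add (integrable_const _) hgv, integral_const]
        simp

/-- Pointwise bound for the difference of second gradient components. -/
lemma D2_diff {d : ℕ} {ε : ℝ} (hε : 0 < ε) (P : Measure (EuclideanSpace ℝ (Fin d)))
    [IsProbabilityMeasure P]
    (c : EuclideanSpace ℝ (Fin d) → EuclideanSpace ℝ (Fin d) → ℝ)
    (f g u v : EuclideanSpace ℝ (Fin d) → ℝ) (y : EuclideanSpace ℝ (Fin d))
    (hF : Integrable (fun x => max (f x + g y - c x y) 0) P)
    (hG : Integrable (fun x => max (u x + v y - c x y) 0) P)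
    (hfu : Integrable (fun x => |f x - u x|) P) :
    |D2Gamma ε P c f g y - D2Gamma ε P c u v y| ≤
      (1 / ε) * ((∫ x, |f x - u x| ∂P) + |g y - v y|) := by
  simp only [D2Gamma]
  have hrw : (1 - 1 / ε * ∫ x, max (f x + g y - c x y) 0 ∂P) -
      (1 - 1 / ε * ∫ x, max (u x + v y - c x y) 0 ∂P) =
      (1 / ε) * ((∫ x, max (u x + v y - c x y) 0 ∂P) -
        ∫ x, max (f x + g y - c x y) 0 ∂P) := by ring
  rw [hrw, abs_mul, abs_of_nonneg (by positivity : (0:ℝ) ≤ 1 / ε)]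
  gcongr
  rw [← integral_sub hG hF]
  have hRint : Integrable (fun x => |f x - u x| + |g y - v y|) P :=
    hfu.add (integrable_const _)
  calc |∫ x, (max (u x + v y - c x y) 0 - max (f x + g y - c x y) 0) ∂P|
      ≤ ∫ x, |max (u x + v y - c x y) 0 - max (f x + g y - c x y) 0| ∂P := by
        simpa [Real.norm_eq_abs] using norm_integral_le_integral_norm (μ := P)
          (fun x => max (u x + v y - c x y) 0 - max (f x + g y - c x y) 0)
    _ ≤ ∫ x, (|f x - u x| + |g y - v y|) ∂P := by
        refine integral_mono (hG.sub hF).abs hRint fun x => ?_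
        calc |max (u x + v y - c x y) 0 - max (f x + g y - c x y) 0|
            ≤ |(u x + v y - c x y) - (f x + g y - c x y)| := abs_max_sub_max_le_abs _ _ _
          _ = |(u x - f x) + (v y - g y)| := by ring_nf
          _ ≤ |u x - f x| + |v y - g y| := abs_add_le _ _
          _ = |f x - u x| + |g y - v y| := by rw [abs_sub_comm (u x), abs_sub_comm (v y)]
    _ = (∫ x, |f x - u x| ∂P) + |g y - v y| := by
        rw [integral_add hfu (integrable_const _), integral_const]
        simp

/-- L² bound for the difference of first gradient components. -/
lemma D1_L2 {d : ℕ} {ε : ℝ} (hε : 0 < ε)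
    (P Q : Measure (EuclideanSpace ℝ (Fin d)))
    [IsProbabilityMeasure P] [IsProbabilityMeasure Q]
    {Ω' : Set (EuclideanSpace ℝ (Fin d))} (hΩ'c : IsCompact Ω') (hQsupp : Q Ω'ᶜ = 0)
    {c : EuclideanSpace ℝ (Fin d) → EuclideanSpace ℝ (Fin d) → ℝ}
    (hcc : Continuous (Function.uncurry c))
    (f g u v : EuclideanSpace ℝ (Fin d) → ℝ)
    (hf : MemLp f 2 P) (hg : MemLp g 2 Q) (hu : MemLp u 2 P) (hv : MemLp v 2 Q) :
    Real.sqrt (∫ x, (D1Gamma ε Q c f g x - D1Gamma ε Q c u v x) ^ 2 ∂P) ≤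
      (1 / ε) * Real.sqrt (∫ x, (f x - u x) ^ 2 ∂P) + (1 / ε) * ∫ y, |g y - v y| ∂Q := by
  have hgv : Integrable (fun y => |g y - v y|) Q := ((hg.sub hv).integrable one_le_two).abs
  have hIgv : 0 ≤ ∫ y, |g y - v y| ∂Q := integral_nonneg fun y => abs_nonneg _
  have hcx : ∀ x, Continuous (fun y => c x y) := fun x =>
    hcc.comp (continuous_const.prodMk continuous_id)
  have hF : ∀ x, Integrable (fun y => max (f x + g y - c x y) 0) Q := fun x =>
    (max_int Q hΩ'c hQsupp hg (hcx x) (f x)).congr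
      (Filter.Eventually.of_forall fun y => by simp only []; rw [show g y + f x - c x y = f x + g y - c x y from by ring])
  have hG : ∀ x, Integrable (fun y => max (u x + v y - c x y) 0) Q := fun x =>
    (max_int Q hΩ'c hQsupp hv (hcx x) (u x)).congr
      (Filter.Eventually.of_forall fun y => by simp only []; rw [show v y + u x - c x y = u x + v y - c x y from by ring])
  have := key (μ := P) (h := fun x => D1Gamma ε Q c f g x - D1Gamma ε Q c u v x)
    (a := fun x => f x - u x) (C := 1 / ε) (c₀ := (1 / ε) * ∫ y, |g y - v y| ∂Q)
    (by positivity) (by positivity) (hf.sub hu) ?_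
  · exact this
  · refine Filter.Eventually.of_forall fun x => ?_
    have := D1_diff hε Q c f g u v x (hF x) (hG x) hgv
    calc |D1Gamma ε Q c f g x - D1Gamma ε Q c u v x|
        ≤ (1 / ε) * (|f x - u x| + ∫ y, |g y - v y| ∂Q) := this
      _ = 1 / ε * |f x - u x| + 1 / ε * ∫ y, |g y - v y| ∂Q := by ring

/-- L² bound for the difference of second gradient components. -/
lemma D2_L2 {d : ℕ} {ε : ℝ} (hε : 0 < ε)
    (P Q : Measure (EuclideanSpace ℝ (Fin d)))
    [IsProbabilityMeasure P] [IsProbabilityMeasure Q]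
    {Ω : Set (EuclideanSpace ℝ (Fin d))} (hΩc : IsCompact Ω) (hPsupp : P Ωᶜ = 0)
    {c : EuclideanSpace ℝ (Fin d) → EuclideanSpace ℝ (Fin d) → ℝ}
    (hcc : Continuous (Function.uncurry c))
    (f g u v : EuclideanSpace ℝ (Fin d) → ℝ)
    (hf : MemLp f 2 P) (hg : MemLp g 2 Q) (hu : MemLp u 2 P) (hv : MemLp v 2 Q) :
    Real.sqrt (∫ y, (D2Gamma ε P c f g y - D2Gamma ε P c u v y) ^ 2 ∂Q) ≤
      (1 / ε) * (∫ x, |f x - u x| ∂P) + (1 / ε) * Real.sqrt (∫ y, (g y - v y) ^ 2 ∂Q) := by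
  have hfu : Integrable (fun x => |f x - u x|) P := ((hf.sub hu).integrable one_le_two).abs
  have hIfu : 0 ≤ ∫ x, |f x - u x| ∂P := integral_nonneg fun x => abs_nonneg _
  have hcy : ∀ y, Continuous (fun x => c x y) := fun y =>
    hcc.comp (continuous_id.prodMk continuous_const)
  have hF : ∀ y, Integrable (fun x => max (f x + g y - c x y) 0) P := fun y =>
    max_int P hΩc hPsupp hf (hcy y) (g y)
  have hG : ∀ y, Integrable (fun x => max (u x + v y - c x y) 0) P := fun y =>
    max_int P hΩc hPsupp hu (hcy y) (v y)
  have := key (μ := Q) (h := fun y => D2Gamma ε P c f g y - D2Gamma ε P c u v y)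
    (a := fun y => g y - v y) (C := 1 / ε) (c₀ := (1 / ε) * ∫ x, |f x - u x| ∂P)
    (by positivity) (by positivity) (hg.sub hv) ?_
  · linarith [this]
  · refine Filter.Eventually.of_forall fun y => ?_
    have := D2_diff hε P c f g u v y (hF y) (hG y) hfu
    calc |D2Gamma ε P c f g y - D2Gamma ε P c u v y|
        ≤ (1 / ε) * ((∫ x, |f x - u x| ∂P) + |g y - v y|) := this
      _ = 1 / ε * |g y - v y| + 1 / ε * ∫ x, |f x - u x| ∂P := by ring


theorem dual_gradient_lipschitz'
    (d : ℕ) (hd : 1 ≤ d) (ε : ℝ) (hε : 0 < ε)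
    (Ω Ω' : Set (EuclideanSpace ℝ (Fin d)))
    (hΩc : IsCompact Ω) (hΩ'c : IsCompact Ω')
    (P Q : Measure (EuclideanSpace ℝ (Fin d)))
    [IsProbabilityMeasure P] [IsProbabilityMeasure Q]
    (hPsupp : P Ωᶜ = 0) (hQsupp : Q Ω'ᶜ = 0)
    (c : EuclideanSpace ℝ (Fin d) → EuclideanSpace ℝ (Fin d) → ℝ)
    (L : ℝ) (hL : 0 < L)
    (hc : LipschitzWith (Real.toNNReal L) (Function.uncurry c)) :
    (∀ f g u v : EuclideanSpace ℝ (Fin d) → ℝ,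
      MemLp f 2 P → MemLp g 2 Q → MemLp u 2 P → MemLp v 2 Q →
      Real.sqrt ((∫ x, (D1Gamma ε Q c f g x - D1Gamma ε Q c u v x) ^ 2 ∂P) +
          ∫ y, (D2Gamma ε P c f g y - D2Gamma ε P c u v y) ^ 2 ∂Q) ≤
        (2 / ε) * Real.sqrt ((∫ x, (f x - u x) ^ 2 ∂P) + ∫ y, (g y - v y) ^ 2 ∂Q)) ∧
    (∀ f u g : EuclideanSpace ℝ (Fin d) → ℝ,
      MemLp f 2 P → MemLp u 2 P → MemLp g 2 Q →
      Real.sqrt (∫ x, (D1Gamma ε Q c f g x - D1Gamma ε Q c u g x) ^ 2 ∂P) ≤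
        (1 / ε) * Real.sqrt (∫ x, (f x - u x) ^ 2 ∂P) ∧
      Real.sqrt (∫ y, (D2Gamma ε P c f g y - D2Gamma ε P c u g y) ^ 2 ∂Q) ≤
        (1 / ε) * Real.sqrt (∫ x, (f x - u x) ^ 2 ∂P)) ∧
    (∀ f g v : EuclideanSpace ℝ (Fin d) → ℝ,
      MemLp f 2 P → MemLp g 2 Q → MemLp v 2 Q →
      Real.sqrt (∫ x, (D1Gamma ε Q c f g x - D1Gamma ε Q c f v x) ^ 2 ∂P) ≤
        (1 / ε) * Real.sqrt (∫ y, (g y - v y) ^ 2 ∂Q) ∧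
      Real.sqrt (∫ y, (D2Gamma ε P c f g y - D2Gamma ε P c f v y) ^ 2 ∂Q) ≤
        (1 / ε) * Real.sqrt (∫ y, (g y - v y) ^ 2 ∂Q)) := by
  have hcc : Continuous (Function.uncurry c) := hc.continuous
  refine ⟨?_, ?_, ?_⟩
  · -- full gradient
    intro f g u v hf hg hu hv
    set A := Real.sqrt (∫ x, (f x - u x) ^ 2 ∂P) with hA
    set B := Real.sqrt (∫ y, (g y - v y) ^ 2 ∂Q) with hB
    have hAnn : 0 ≤ A := Real.sqrt_nonneg _
    have hBnn : 0 ≤ B := Real.sqrt_nonneg _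
    have hA2 : A ^ 2 = ∫ x, (f x - u x) ^ 2 ∂P :=
      Real.sq_sqrt (integral_nonneg fun x => sq_nonneg _)
    have hB2 : B ^ 2 = ∫ y, (g y - v y) ^ 2 ∂Q :=
      Real.sq_sqrt (integral_nonneg fun y => sq_nonneg _)
    have hgvB : ∫ y, |g y - v y| ∂Q ≤ B := l1_le_l2 (hg.sub hv)
    have hfuA : ∫ x, |f x - u x| ∂P ≤ A := l1_le_l2 (hf.sub hu)
    have h1 := D1_L2 hε P Q hΩ'c hQsupp hcc f g u v hf hg hu hv
    have h2 := D2_L2 hε P Q hΩc hPsupp hcc f g u v hf hg hu hv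
    set Sa := ∫ x, (D1Gamma ε Q c f g x - D1Gamma ε Q c u v x) ^ 2 ∂P with hSa
    set Sb := ∫ y, (D2Gamma ε P c f g y - D2Gamma ε P c u v y) ^ 2 ∂Q with hSb
    have hSann : 0 ≤ Sa := integral_nonneg fun x => sq_nonneg _
    have hSbnn : 0 ≤ Sb := integral_nonneg fun y => sq_nonneg _
    have hεi : (0:ℝ) < 1 / ε := by positivity
    have hSa1 : Real.sqrt Sa ≤ (1 / ε) * (A + B) := by
      calc Real.sqrt Sa ≤ (1 / ε) * A + (1 / ε) * ∫ y, |g y - v y| ∂Q := h1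
        _ ≤ (1 / ε) * (A + B) := by nlinarith
    have hSb1 : Real.sqrt Sb ≤ (1 / ε) * (A + B) := by
      calc Real.sqrt Sb ≤ (1 / ε) * (∫ x, |f x - u x| ∂P) + (1 / ε) * B := h2
        _ ≤ (1 / ε) * (A + B) := by nlinarith
    have hSaq : Sa ≤ ((1 / ε) * (A + B)) ^ 2 := by
      rw [← Real.sq_sqrt hSann]
      exact pow_le_pow_left₀ (Real.sqrt_nonneg _) hSa1 2
    have hSbq : Sb ≤ ((1 / ε) * (A + B)) ^ 2 := by
      rw [← Real.sq_sqrt hSbnn]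
      exact pow_le_pow_left₀ (Real.sqrt_nonneg _) hSb1 2
    have hkey : Sa + Sb ≤ ((2 / ε) * Real.sqrt (A ^ 2 + B ^ 2)) ^ 2 := by
      have hs : Real.sqrt (A ^ 2 + B ^ 2) ^ 2 = A ^ 2 + B ^ 2 :=
        Real.sq_sqrt (by positivity)
      have hexp : ((2 / ε) * Real.sqrt (A ^ 2 + B ^ 2)) ^ 2
          = (2 / ε) ^ 2 * (A ^ 2 + B ^ 2) := by rw [mul_pow, hs]
      rw [hexp]
      have h4 : (2 / ε) ^ 2 = 4 * (1 / ε) ^ 2 := by field_simp; ring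
      rw [h4]
      nlinarith [mul_nonneg (sq_nonneg (1 / ε)) (sq_nonneg (A - B))]
    calc Real.sqrt (Sa + Sb)
        ≤ Real.sqrt (((2 / ε) * Real.sqrt (A ^ 2 + B ^ 2)) ^ 2) := Real.sqrt_le_sqrt hkey
      _ = (2 / ε) * Real.sqrt (A ^ 2 + B ^ 2) := Real.sqrt_sq (by positivity)
      _ = (2 / ε) * Real.sqrt ((∫ x, (f x - u x) ^ 2 ∂P) + ∫ y, (g y - v y) ^ 2 ∂Q) := by
          rw [hA2, hB2]
  · -- first coordinate
    intro f u g hf hu hg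
    constructor
    · have h := D1_L2 hε P Q hΩ'c hQsupp hcc f g u g hf hg hu hg
      simpa using h
    · have h := D2_L2 hε P Q hΩc hPsupp hcc f g u g hf hg hu hg
      simp only [sub_self] at h
      have hz : Real.sqrt (∫ _y : EuclideanSpace ℝ (Fin d), (0:ℝ) ^ 2 ∂Q) = 0 := by simp
      have hfuA : ∫ x, |f x - u x| ∂P ≤ Real.sqrt (∫ x, (f x - u x) ^ 2 ∂P) :=
        l1_le_l2 (hf.sub hu)
      have hεi : (0:ℝ) < 1 / ε := by positivity
      calc Real.sqrt (∫ y, (D2Gamma ε P c f g y - D2Gamma ε P c u g y) ^ 2 ∂Q)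
          ≤ 1 / ε * (∫ x, |f x - u x| ∂P) + 1 / ε * Real.sqrt (∫ _y, (0:ℝ) ^ 2 ∂Q) := h
        _ = 1 / ε * ∫ x, |f x - u x| ∂P := by rw [hz]; ring
        _ ≤ 1 / ε * Real.sqrt (∫ x, (f x - u x) ^ 2 ∂P) := by
            exact mul_le_mul_of_nonneg_left hfuA (le_of_lt hεi)
  · -- second coordinate
    intro f g v hf hg hv
    constructor
    · have h := D1_L2 hε P Q hΩ'c hQsupp hcc f g f v hf hg hf hv
      simp only [sub_self] at h
      have hz : Real.sqrt (∫ _x : EuclideanSpace ℝ (Fin d), (0:ℝ) ^ 2 ∂P) = 0 := by simp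
      have hgvB : ∫ y, |g y - v y| ∂Q ≤ Real.sqrt (∫ y, (g y - v y) ^ 2 ∂Q) :=
        l1_le_l2 (hg.sub hv)
      have hεi : (0:ℝ) < 1 / ε := by positivity
      calc Real.sqrt (∫ x, (D1Gamma ε Q c f g x - D1Gamma ε Q c f v x) ^ 2 ∂P)
          ≤ 1 / ε * Real.sqrt (∫ _x, (0:ℝ) ^ 2 ∂P) + 1 / ε * ∫ y, |g y - v y| ∂Q := h
        _ = 1 / ε * ∫ y, |g y - v y| ∂Q := by rw [hz]; ring
        _ ≤ 1 / ε * Real.sqrt (∫ y, (g y - v y) ^ 2 ∂Q) := by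
            exact mul_le_mul_of_nonneg_left hgvB (le_of_lt hεi)
    · have h := D2_L2 hε P Q hΩc hPsupp hcc f g f v hf hg hf hv
      simpa using h

/-- Lipschitz continuity of the dual gradient (Lemma 4.1): `DΓ` is `(2/ε)`-Lipschitz on
`L²(P) × L²(Q)`, and each component is `(1/ε)`-Lipschitz in each coordinate. -/
theorem dual_gradient_lipschitz
    (d : ℕ) (hd : 1 ≤ d) (ε : ℝ) (hε : 0 < ε)
    (Ω Ω' : Set (EuclideanSpace ℝ (Fin d)))
    (hΩc : IsCompact Ω) (hΩ'c : IsCompact Ω')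
    (P Q : Measure (EuclideanSpace ℝ (Fin d)))
    [IsProbabilityMeasure P] [IsProbabilityMeasure Q]
    (hPsupp : P Ωᶜ = 0) (hQsupp : Q Ω'ᶜ = 0)
    (c : EuclideanSpace ℝ (Fin d) → EuclideanSpace ℝ (Fin d) → ℝ)
    (L : ℝ) (hL : 0 < L)
    (hc : LipschitzWith (Real.toNNReal L) (Function.uncurry c)) :
    -- (2/ε)-Lipschitz continuity of the full gradient
    (∀ f g u v : EuclideanSpace ℝ (Fin d) → ℝ,
      MemLp f 2 P → MemLp g 2 Q → MemLp u 2 P → MemLp v 2 Q →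
      Real.sqrt ((∫ x, (D1Gamma ε Q c f g x - D1Gamma ε Q c u v x) ^ 2 ∂P) +
          ∫ y, (D2Gamma ε P c f g y - D2Gamma ε P c u v y) ^ 2 ∂Q) ≤
        (2 / ε) * Real.sqrt ((∫ x, (f x - u x) ^ 2 ∂P) + ∫ y, (g y - v y) ^ 2 ∂Q)) ∧
    -- (1/ε)-Lipschitz continuity of D₁Γ and D₂Γ in the first coordinate
    (∀ f u g : EuclideanSpace ℝ (Fin d) → ℝ,
      MemLp f 2 P → MemLp u 2 P → MemLp g 2 Q →
      Real.sqrt (∫ x, (D1Gamma ε Q c f g x - D1Gamma ε Q c u g x) ^ 2 ∂P) ≤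
        (1 / ε) * Real.sqrt (∫ x, (f x - u x) ^ 2 ∂P) ∧
      Real.sqrt (∫ y, (D2Gamma ε P c f g y - D2Gamma ε P c u g y) ^ 2 ∂Q) ≤
        (1 / ε) * Real.sqrt (∫ x, (f x - u x) ^ 2 ∂P)) ∧
    -- (1/ε)-Lipschitz continuity of D₁Γ and D₂Γ in the second coordinate
    (∀ f g v : EuclideanSpace ℝ (Fin d) → ℝ,
      MemLp f 2 P → MemLp g 2 Q → MemLp v 2 Q →
      Real.sqrt (∫ x, (D1Gamma ε Q c f g x - D1Gamma ε Q c f v x) ^ 2 ∂P) ≤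
        (1 / ε) * Real.sqrt (∫ y, (g y - v y) ^ 2 ∂Q) ∧
      Real.sqrt (∫ y, (D2Gamma ε P c f g y - D2Gamma ε P c f v y) ^ 2 ∂Q) ≤
        (1 / ε) * Real.sqrt (∫ y, (g y - v y) ^ 2 ∂Q)) := by
  exact dual_gradient_lipschitz' d hd ε hε Ω Ω' hΩc hΩ'c P Q hPsupp hQsupp c L hL hc
end

section
/- Sup norm of a direct sum: let Ω and Ω′ be nonempty sets and let f : Ω → ℝ and g : Ω′ → ℝ be bounded functions. Then sup_{(x,y) ∈ Ω×Ω′} |f(x) + g(y)| = inf_{a ∈ ℝ} ( sup_{x ∈ Ω} |f(x) − a| + sup_{y ∈ Ω′} |g(y) + a| ). -/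
/-- Sup norm of a direct sum (Remark 4.2): for bounded `f : Ω → ℝ` and `g : Ω' → ℝ`,
`sup_{(x,y)} |f(x) + g(y)| = inf_{a ∈ ℝ} (sup_x |f(x) - a| + sup_y |g(y) + a|)`. -/
theorem sup_norm_direct_sum
    (Ω Ω' : Type*) [Nonempty Ω] [Nonempty Ω']
    (f : Ω → ℝ) (g : Ω' → ℝ)
    (Cf : ℝ) (hf : ∀ x, |f x| ≤ Cf) (Cg : ℝ) (hg : ∀ y, |g y| ≤ Cg) :
    (⨆ p : Ω × Ω', |f p.1 + g p.2|) =
      ⨅ a : ℝ, ((⨆ x, |f x - a|) + ⨆ y, |g y + a|) := by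
  classical
  have bAf : BddAbove (Set.range f) :=
    ⟨Cf, by rintro _ ⟨x, rfl⟩; exact (le_abs_self _).trans (hf x)⟩
  have bBf : BddBelow (Set.range f) :=
    ⟨-Cf, by rintro _ ⟨x, rfl⟩; exact neg_le_of_abs_le (hf x)⟩
  have bAg : BddAbove (Set.range g) :=
    ⟨Cg, by rintro _ ⟨y, rfl⟩; exact (le_abs_self _).trans (hg y)⟩
  have bBg : BddBelow (Set.range g) :=
    ⟨-Cg, by rintro _ ⟨y, rfl⟩; exact neg_le_of_abs_le (hg y)⟩
  have habsf : ∀ a : ℝ, BddAbove (Set.range fun x => |f x - a|) := by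
    intro a
    refine ⟨Cf + |a|, ?_⟩
    rintro _ ⟨x, rfl⟩
    have h1 := abs_le.mp (hf x)
    have h2 := le_abs_self a
    have h3 := neg_abs_le a
    rw [abs_le]; constructor <;> linarith
  have habsg : ∀ a : ℝ, BddAbove (Set.range fun y => |g y + a|) := by
    intro a
    refine ⟨Cg + |a|, ?_⟩
    rintro _ ⟨y, rfl⟩
    have h1 := abs_le.mp (hg y)
    have h2 := le_abs_self a
    have h3 := neg_abs_le a
    rw [abs_le]; constructor <;> linarith
  have bS : BddAbove (Set.range fun p : Ω × Ω' => |f p.1 + g p.2|) := by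
    refine ⟨Cf + Cg, ?_⟩
    rintro _ ⟨p, rfl⟩
    have h1 := abs_le.mp (hf p.1)
    have h2 := abs_le.mp (hg p.2)
    rw [abs_le]; constructor <;> linarith
  set Mf := ⨆ x, f x with hMf
  set mf := ⨅ x, f x with hmf
  set Mg := ⨆ y, g y with hMg
  set mg := ⨅ y, g y with hmg
  set S := ⨆ p : Ω × Ω', |f p.1 + g p.2| with hS
  have hMfx : ∀ x, f x ≤ Mf := fun x => le_ciSup bAf x
  have hmfx : ∀ x, mf ≤ f x := fun x => ciInf_le bBf x
  have hMgy : ∀ y, g y ≤ Mg := fun y => le_ciSup bAg y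
  have hmgy : ∀ y, mg ≤ g y := fun y => ciInf_le bBg y
  have hSp : ∀ x y, |f x + g y| ≤ S := fun x y => le_ciSup bS (x, y)
  -- Mf + Mg ≤ S
  have hS1 : Mf + Mg ≤ S := by
    have h1 : ∀ x, Mg ≤ S - f x := by
      intro x
      apply ciSup_le
      intro y
      have := (le_abs_self (f x + g y)).trans (hSp x y)
      linarith
    have h2 : Mf ≤ S - Mg := ciSup_le fun x => by linarith [h1 x]
    linarith
  -- -(mf + mg) ≤ S
  have hS2 : -mf - mg ≤ S := by
    have h1 : ∀ x, -S - f x ≤ mg := by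
      intro x
      apply le_ciInf
      intro y
      have := (neg_abs_le (f x + g y)).trans_eq rfl
      have h := (neg_le_of_abs_le (hSp x y))
      linarith
    have h2 : -S - mg ≤ mf := le_ciInf fun x => by linarith [h1 x]
    linarith
  set a₀ : ℝ := (Mf + mf) / 2 with ha₀
  apply le_antisymm
  · -- sup ≤ inf
    apply le_ciInf
    intro a
    apply ciSup_le
    intro p
    calc |f p.1 + g p.2| = |(f p.1 - a) + (g p.2 + a)| := by ring_nf
      _ ≤ |f p.1 - a| + |g p.2 + a| := abs_add_le _ _
      _ ≤ _ := add_le_add (le_ciSup (habsf a) p.1) (le_ciSup (habsg a) p.2)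
  · -- inf ≤ sup
    have bInf : BddBelow (Set.range fun a : ℝ => (⨆ x, |f x - a|) + ⨆ y, |g y + a|) := by
      refine ⟨0, ?_⟩
      rintro _ ⟨a, rfl⟩
      have h1 : (0:ℝ) ≤ ⨆ x, |f x - a| :=
        (abs_nonneg _).trans (le_ciSup (habsf a) (Classical.arbitrary Ω))
      have h2 : (0:ℝ) ≤ ⨆ y, |g y + a| :=
        (abs_nonneg _).trans (le_ciSup (habsg a) (Classical.arbitrary Ω'))
      simpa using add_nonneg h1 h2
    have key : (⨆ x, |f x - a₀|) + (⨆ y, |g y + a₀|) ≤ S := by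
      have t1 : (⨆ x, |f x - a₀|) ≤ (Mf - mf) / 2 := by
        apply ciSup_le
        intro x
        rw [abs_le]
        constructor <;> [linarith [hmfx x, ha₀]; linarith [hMfx x, ha₀]]
      have t2 : (⨆ y, |g y + a₀|) ≤ max (Mg + a₀) (-mg - a₀) := by
        apply ciSup_le
        intro y
        rcases abs_cases (g y + a₀) with ⟨h, _⟩ | ⟨h, _⟩
        · rw [h]; exact le_trans (by linarith [hMgy y]) (le_max_left _ _)
        · rw [h]; exact le_trans (by linarith [hmgy y]) (le_max_right _ _)
      rcases le_total (Mg + a₀) (-mg - a₀) with h | h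
      · rw [max_eq_right h] at t2; linarith
      · rw [max_eq_left h] at t2; linarith
    exact (ciInf_le bInf a₀).trans key
end

section
/- Mass lower bound for sections of the optimal support: let (f*,g*) be potentials. For every x ∈ Ω, Q({y ∈ Ω′ : f*(x)+g*(y)−c(x,y) ≥ ε/2}) ≥ inf_{y′∈Ω′} Q(B_{ε/(8L)}(y′)), and for every y ∈ Ω′, P({x ∈ Ω : f*(x)+g*(y)−c(x,y) ≥ ε/2}) ≥ inf_{x′∈Ω} P(B_{ε/(8L)}(x′)), where B_r(z) denotes the open Euclidean ball of radius r centered at z. -/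
open MeasureTheory Metric
open scoped ENNReal NNReal

lemma aux_section {E : Type*} [MeasurableSpace E] [PseudoMetricSpace E]
    (μ : Measure E) [IsProbabilityMeasure μ] (S : Set E) (hS : μ Sᶜ = 0)
    (ε L : ℝ) (hε : 0 < ε) (hL : 0 < L)
    (h : E → ℝ) (hlip : ∀ y ∈ S, ∀ y' ∈ S, |h y - h y'| ≤ 2 * L * dist y y')
    (hint : ∫ y, max (h y) 0 ∂μ = ε) :
    (⨅ y' : S, μ (Metric.ball (y' : E) (ε / (8 * L)))) ≤ μ {y | y ∈ S ∧ ε / 2 ≤ h y} := by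
  obtain ⟨y0, hy0S, hy0⟩ : ∃ y0 ∈ S, 3 * ε / 4 ≤ h y0 := by
    by_contra hcon
    push_neg at hcon
    have haeS : ∀ᵐ y ∂μ, y ∈ S := by
      rw [ae_iff]; exact hS
    have hle : ∫ y, max (h y) 0 ∂μ ≤ ∫ _, 3 * ε / 4 ∂μ := by
      refine integral_mono_of_nonneg ?_ (integrable_const _) ?_
      · filter_upwards with y using le_max_right _ _
      · filter_upwards [haeS] with y hy
        exact max_le (hcon y hy).le (by linarith)
    rw [hint, integral_const] at hle
    simp at hle
    linarith
  refine le_trans (iInf_le _ (⟨y0, hy0S⟩ : S)) ?_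
  have hsub : Metric.ball y0 (ε / (8 * L)) ∩ S ⊆ {y | y ∈ S ∧ ε / 2 ≤ h y} := by
    rintro y ⟨hyb, hyS⟩
    refine ⟨hyS, ?_⟩
    have hd : dist y y0 < ε / (8 * L) := mem_ball.mp hyb
    have := hlip y hyS y0 hy0S
    have h2 : |h y - h y0| ≤ 2 * L * (ε / (8 * L)) :=
      this.trans (by nlinarith [dist_nonneg (x := y) (y := y0)])
    have h3 : 2 * L * (ε / (8 * L)) = ε / 4 := by field_simp; ring
    rw [h3] at h2
    have := abs_le.mp h2
    linarith [this.1]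
  calc μ (Metric.ball y0 (ε / (8 * L)))
      ≤ μ ((Metric.ball y0 (ε / (8 * L)) ∩ S) ∪ Sᶜ) := by
        apply measure_mono; intro y hy
        by_cases hyS : y ∈ S
        · exact Or.inl ⟨hy, hyS⟩
        · exact Or.inr hyS
    _ ≤ μ (Metric.ball y0 (ε / (8 * L)) ∩ S) + μ Sᶜ := measure_union_le _ _
    _ = μ (Metric.ball y0 (ε / (8 * L)) ∩ S) := by rw [hS, add_zero]
    _ ≤ μ {y | y ∈ S ∧ ε / 2 ≤ h y} := measure_mono hsub


/-- Mass lower bound for the sections of the optimal support (Remark 3.7 / Eq. (3.8)):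
each `ε/2`-section of `{f* ⊕ g* - c ≥ ε/2}` contains a ball of radius `ε/(8L)`
intersected with the support, hence carries at least the infimal ball mass. -/
theorem section_mass_lower_bound
    (d : ℕ) (hd : 1 ≤ d) (ε : ℝ) (hε : 0 < ε)
    (Ω Ω' : Set (EuclideanSpace ℝ (Fin d)))
    (hΩc : IsCompact Ω) (hΩconv : Convex ℝ Ω) (hΩne : Ω.Nonempty)
    (hΩ'c : IsCompact Ω') (hΩ'ne : Ω'.Nonempty)
    (P Q : Measure (EuclideanSpace ℝ (Fin d)))
    [IsProbabilityMeasure P] [IsProbabilityMeasure Q]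
    (ρ : EuclideanSpace ℝ (Fin d) → ℝ) (hρm : Measurable ρ)
    (lamP LamP : ℝ) (hlam : 0 < lamP)
    (hPdef : P = (volume.restrict Ω).withDensity fun x => ENNReal.ofReal (ρ x))
    (hρlb : ∀ x ∈ Ω, lamP ≤ ρ x) (hρub : ∀ x ∈ Ω, ρ x ≤ LamP)
    (hQsupp : Q Ω'ᶜ = 0)
    (c : EuclideanSpace ℝ (Fin d) → EuclideanSpace ℝ (Fin d) → ℝ)
    (L : ℝ) (hL : 0 < L)
    (hc : LipschitzWith (Real.toNNReal L) (Function.uncurry c))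
    (fStar gStar : EuclideanSpace ℝ (Fin d) → ℝ)
    (hfsLip : LipschitzOnWith (Real.toNNReal L) fStar Ω)
    (hgsLip : LipschitzOnWith (Real.toNNReal L) gStar Ω')
    (hFOC1 : ∀ x ∈ Ω, ∫ y, max (fStar x + gStar y - c x y) 0 ∂Q = ε)
    (hFOC2 : ∀ y ∈ Ω', ∫ x, max (fStar x + gStar y - c x y) 0 ∂P = ε) :
    (∀ x ∈ Ω,
      (⨅ y' : Ω', Q (Metric.ball (y' : EuclideanSpace ℝ (Fin d)) (ε / (8 * L)))) ≤
        Q {y | y ∈ Ω' ∧ ε / 2 ≤ fStar x + gStar y - c x y}) ∧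
    (∀ y ∈ Ω',
      (⨅ x' : Ω, P (Metric.ball (x' : EuclideanSpace ℝ (Fin d)) (ε / (8 * L)))) ≤
        P {x | x ∈ Ω ∧ ε / 2 ≤ fStar x + gStar y - c x y}) := by
  have hLcoe : ((Real.toNNReal L : ℝ≥0) : ℝ) = L := Real.coe_toNNReal L hL.le
  have hcdist : ∀ (a b a' b' : EuclideanSpace ℝ (Fin d)),
      |c a b - c a' b'| ≤ L * max (dist a a') (dist b b') := by
    intro a b a' b'
    have := hc.dist_le_mul (a, b) (a', b')
    rwa [Real.dist_eq, Prod.dist_eq, hLcoe] at this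
  have hPsupp : P Ωᶜ = 0 := by
    rw [hPdef, withDensity_apply _ hΩc.isClosed.measurableSet.compl,
      Measure.restrict_restrict hΩc.isClosed.measurableSet.compl]
    simp
  constructor
  · intro x hx
    refine aux_section Q Ω' hQsupp ε L hε hL _ ?_ (hFOC1 x hx)
    intro y hy y' hy'
    have hg : |gStar y - gStar y'| ≤ L * dist y y' := by
      have := hgsLip.dist_le_mul y hy y' hy'
      rwa [Real.dist_eq, hLcoe] at this
    have hcb : |c x y - c x y'| ≤ L * dist y y' := by
      have := hcdist x y x y'
      simpa [dist_self, dist_nonneg] using this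
    calc |fStar x + gStar y - c x y - (fStar x + gStar y' - c x y')|
        = |(gStar y - gStar y') - (c x y - c x y')| := by ring_nf
      _ ≤ |gStar y - gStar y'| + |c x y - c x y'| := abs_sub _ _
      _ ≤ L * dist y y' + L * dist y y' := add_le_add hg hcb
      _ = 2 * L * dist y y' := by ring
  · intro y hy
    refine aux_section P Ω hPsupp ε L hε hL _ ?_ (hFOC2 y hy)
    intro x hx x' hx'
    have hf : |fStar x - fStar x'| ≤ L * dist x x' := by
      have := hfsLip.dist_le_mul x hx x' hx'
      rwa [Real.dist_eq, hLcoe] at this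
    have hcb : |c x y - c x' y| ≤ L * dist x x' := by
      have := hcdist x y x' y
      simpa [dist_self, dist_nonneg] using this
    calc |fStar x + gStar y - c x y - (fStar x' + gStar y - c x' y)|
        = |(fStar x - fStar x') - (c x y - c x' y)| := by ring_nf
      _ ≤ |fStar x - fStar x'| + |c x y - c x' y| := abs_sub _ _
      _ ≤ L * dist x x' + L * dist x x' := add_le_add hf hcb
      _ = 2 * L * dist x x' := by ring
end
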